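/- arXiv:0908.0137 — 2 statements merged into one kernel-verified Lean document; each statement's English description precedes it below -/
import Mathlib

section
/- Let M be an n×n symmetric matrix with eigenvalues λ₁ > λ₂ > … and ‖M‖₂ = λ₁, let u₁ be the unit leading eigenvector, E the subsampling residual with sampling probability p, and R the reduced resolvent of M at λ₁. Then E[‖R E u₁‖₂²] ≤ (1/(1 − λ₂/λ₁)²) · ‖u₁‖_∞² · NumRank(M)/p, where NumRank(M) = ‖M‖_F²/‖M‖₂² is the numerical rank of M. -/
open MeasureTheory ProbabilityTheory Filter Matrix
open scoped ENNReal NNReal BigOperators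

/-- The spectral norm (largest singular value) of a real matrix, i.e. the operator norm
of the induced map between Euclidean spaces. -/
noncomputable def matSpectralNorm {m n : Type*} [Fintype m] [Fintype n] [DecidableEq n]
    (A : Matrix m n ℝ) : ℝ :=
  ‖LinearMap.toContinuousLinearMap (Matrix.toEuclideanLin A)‖

/-- The Euclidean norm of a vector. -/
noncomputable def euclNorm {n : Type*} [Fintype n] (x : n → ℝ) : ℝ :=
  Real.sqrt (∑ i, x i ^ 2)

/-- The sup norm `max_{i,j} |A i j|` of a matrix. -/
noncomputable def supNorm {m n : Type*} [Fintype m] [Fintype n] (A : Matrix m n ℝ) : ℝ :=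
  ‖(fun i j => A i j : m → n → ℝ)‖

/-- An `m × m` Bernoulli-type symmetric random matrix with parameter `p`: the
on-or-above-diagonal entries are independent, equal to `√((1-p)/p)` with probability `p`
and to `-√(p/(1-p))` with probability `1-p`. -/
def IsBernoulliType {Ω : Type*} [MeasurableSpace Ω] (P : Measure Ω) {m : ℕ} (p : ℝ)
    (C : Ω → Matrix (Fin m) (Fin m) ℝ) : Prop :=
  (∀ ω, (C ω).IsSymm) ∧
  (∀ i j, Measurable fun ω => C ω i j) ∧
  iIndepFun
    (fun (q : {q : Fin m × Fin m // q.1 ≤ q.2}) ω => C ω q.val.1 q.val.2) P ∧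
  ∀ i j : Fin m, i ≤ j →
    P {ω | C ω i j = Real.sqrt ((1 - p) / p)} = ENNReal.ofReal p ∧
    P {ω | C ω i j = -Real.sqrt (p / (1 - p))} = ENNReal.ofReal (1 - p)

/-- `E` is the subsampling residual `E = S - M` of the symmetric matrix `M` with sampling
probability `p`; equivalently `E = √((1-p)/p) • (M ∘ C)` with `C` Bernoulli-type. -/
def IsSubsampleResidual {Ω : Type*} [MeasurableSpace Ω] (P : Measure Ω) {n : ℕ} (p : ℝ)
    (M : Matrix (Fin n) (Fin n) ℝ) (E : Ω → Matrix (Fin n) (Fin n) ℝ) : Prop :=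
  ∃ C : Ω → Matrix (Fin n) (Fin n) ℝ, IsBernoulliType P p C ∧
    ∀ ω, E ω = Real.sqrt ((1 - p) / p) • Matrix.hadamard M (C ω)


def QIdx {n : ℕ} (i j : Fin n) : {q : Fin n × Fin n // q.1 ≤ q.2} :=
  if h : i ≤ j then ⟨(i, j), h⟩ else ⟨(j, i), le_of_not_ge h⟩

lemma QIdx_ne {n : ℕ} {k l l' : Fin n} (h : l ≠ l') : QIdx k l ≠ QIdx k l' := by
  intro heq
  unfold QIdx at heq
  by_cases h1 : k ≤ l
  · by_cases h2 : k ≤ l'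
    · rw [dif_pos h1, dif_pos h2, Subtype.mk.injEq, Prod.mk.injEq] at heq
      exact h heq.2
    · rw [dif_pos h1, dif_neg h2, Subtype.mk.injEq, Prod.mk.injEq] at heq
      exact h2 (le_of_eq heq.1)
  · by_cases h2 : k ≤ l'
    · rw [dif_neg h1, dif_pos h2, Subtype.mk.injEq, Prod.mk.injEq] at heq
      exact h1 (le_of_eq heq.1.symm)
    · rw [dif_neg h1, dif_neg h2, Subtype.mk.injEq, Prod.mk.injEq] at heq
      exact h heq.1

lemma sq_sum_eq {ι : Type*} (s : Finset ι) (f : ι → ℝ) :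
    (∑ j ∈ s, f j) ^ 2 = ∑ j ∈ s, ∑ j' ∈ s, f j * f j' := by
  rw [sq, Finset.sum_mul_sum]

lemma ortho_expand {n : ℕ} (u : Fin n → Fin n → ℝ)
    (orth : ∀ i j, (∑ k, u i k * u j k) = if i = j then (1:ℝ) else 0)
    (s : Finset (Fin n)) (a : Fin n → ℝ) :
    ∑ k, (∑ j ∈ s, a j * u j k) ^ 2 = ∑ j ∈ s, (a j) ^ 2 := by
  calc ∑ k, (∑ j ∈ s, a j * u j k) ^ 2
      = ∑ k, ∑ j ∈ s, ∑ j' ∈ s, (a j * u j k) * (a j' * u j' k) := by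
        refine Finset.sum_congr rfl fun k _ => ?_
        rw [sq_sum_eq]
    _ = ∑ j ∈ s, ∑ j' ∈ s, ∑ k, (a j * u j k) * (a j' * u j' k) := by
        rw [Finset.sum_comm]
        exact Finset.sum_congr rfl fun j _ => Finset.sum_comm
    _ = ∑ j ∈ s, ∑ j' ∈ s, (a j * a j') * ∑ k, u j k * u j' k := by
        refine Finset.sum_congr rfl fun j _ => Finset.sum_congr rfl fun j' _ => ?_
        rw [Finset.mul_sum]
        exact Finset.sum_congr rfl fun k _ => by ring
    _ = ∑ j ∈ s, (a j) ^ 2 := by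
        refine Finset.sum_congr rfl fun j hj => ?_
        simp only [orth, mul_ite, mul_one, mul_zero]
        rw [Finset.sum_ite_eq s j (fun j' => a j * a j')]
        simp [hj, sq]

lemma bessel {n : ℕ} (u : Fin n → Fin n → ℝ)
    (orth : ∀ i j, (∑ k, u i k * u j k) = if i = j then (1:ℝ) else 0)
    (y : Fin n → ℝ) :
    ∑ j, (∑ k, u j k * y k) ^ 2 ≤ ∑ k, (y k) ^ 2 := by
  set d : Fin n → ℝ := fun j => ∑ k, u j k * y k with hd
  have h0 : (0:ℝ) ≤ ∑ k, (y k - ∑ j, d j * u j k) ^ 2 :=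
    Finset.sum_nonneg fun k _ => sq_nonneg _
  have e2 : ∑ k, (y k * ∑ j, d j * u j k) = ∑ j, (d j) ^ 2 := by
    have h1 : ∀ k, y k * ∑ j, d j * u j k = ∑ j, d j * (u j k * y k) := by
      intro k; rw [Finset.mul_sum]; exact Finset.sum_congr rfl fun j _ => by ring
    rw [Finset.sum_congr rfl fun k _ => h1 k, Finset.sum_comm]
    refine Finset.sum_congr rfl fun j _ => ?_
    rw [← Finset.mul_sum]
    have : ∑ i, u j i * y i = d j := rfl
    rw [this, sq]
  have e3 : ∑ k, (∑ j, d j * u j k) ^ 2 = ∑ j, (d j) ^ 2 :=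
    ortho_expand u orth Finset.univ d
  have hexp : ∑ k, (y k - ∑ j, d j * u j k) ^ 2
      = (∑ k, (y k) ^ 2) - 2 * (∑ k, y k * ∑ j, d j * u j k) + ∑ k, (∑ j, d j * u j k) ^ 2 := by
    have h2 : ∀ k, (y k - ∑ j, d j * u j k) ^ 2
        = (y k) ^ 2 - 2 * (y k * ∑ j, d j * u j k) + (∑ j, d j * u j k) ^ 2 := fun k => by ring
    rw [Finset.sum_congr rfl fun k _ => h2 k, Finset.sum_add_distrib, Finset.sum_sub_distrib,
      ← Finset.mul_sum]
  linarith [h0, hexp, e2, e3]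

example (d : ℝ) : d * d = d ^2 := (sq d).symm

/-- Theorem 4 of the paper, numerical-rank bound: with `‖M‖₂ = λ₁`,
`E[‖R E u₁‖₂²] ≤ ‖u₁‖_∞² NumRank(M) / ((1-λ₂/λ₁)² p)`. -/
theorem variance_REu_numRank_bound
    {Ω : Type*} [MeasurableSpace Ω] (P : Measure Ω) [IsProbabilityMeasure P]
    {n : ℕ} (hn : 2 ≤ n)
    (M : Matrix (Fin n) (Fin n) ℝ) (lam : Fin n → ℝ) (u : Fin n → Fin n → ℝ)
    (p : ℝ) (E : Ω → Matrix (Fin n) (Fin n) ℝ)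
    (u1 : Fin n → ℝ) (lam1 lam2 : ℝ) (R : Matrix (Fin n) (Fin n) ℝ)
    (hsymm : M.IsSymm)
    (hdecomp : M = ∑ i, lam i • Matrix.vecMulVec (u i) (u i))
    (hunit : ∀ i, euclNorm (u i) = 1)
    (horth : ∀ i j : Fin n, i ≠ j → ∑ k, u i k * u j k = 0)
    (hsorted : StrictAnti lam)
    (hu1 : u1 = u ⟨0, by omega⟩)
    (hlam1 : lam1 = lam ⟨0, by omega⟩) (hlam2 : lam2 = lam ⟨1, by omega⟩)
    (hR : R = ∑ j ∈ Finset.univ.erase (⟨0, by omega⟩ : Fin n),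
      (lam j - lam1)⁻¹ • Matrix.vecMulVec (u j) (u j))
    -- `‖M‖₂ = λ₁`
    (hspec : matSpectralNorm M = lam1)
    (hp0 : 0 < p) (hp1 : p < 1)
    (hE : IsSubsampleResidual P p M E) :
    (∫ ω, (euclNorm ((R * E ω).mulVec u1)) ^ 2 ∂P) ≤
      (1 / (1 - lam2 / lam1) ^ 2) * ‖u1‖ ^ 2 *
        ((∑ i, ∑ j, (M i j) ^ 2) / matSpectralNorm M ^ 2) / p := by
  classical
  set i0 : Fin n := ⟨0, by omega⟩ with hi0
  set i1 : Fin n := ⟨1, by omega⟩ with hi1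
  -- orthonormality
  have orth : ∀ i j, (∑ k, u i k * u j k) = if i = j then (1:ℝ) else 0 := by
    intro i j
    by_cases h : i = j
    · subst h
      simp only [if_pos rfl]
      have h1 := hunit i
      rw [euclNorm, Real.sqrt_eq_one] at h1
      simpa [sq] using h1
    · rw [if_neg h]; exact horth i j h
  have hgap : 0 < lam1 - lam2 := by
    have h01 : i0 < i1 := by rw [hi0, hi1]; exact Fin.mk_lt_mk.mpr (by omega)
    have := hsorted h01
    rw [hlam1, hlam2]; linarith
  set c2 : ℝ := ((lam1 - lam2)⁻¹) ^ 2 with hc2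
  have hc2nn : 0 ≤ c2 := sq_nonneg _
  -- spectral bound for R
  have hRv : ∀ y : Fin n → ℝ, (euclNorm (R.mulVec y)) ^ 2 ≤ c2 * ∑ k, (y k) ^ 2 := by
    intro y
    have hRy : R.mulVec y = fun k => ∑ j ∈ Finset.univ.erase i0,
        ((lam j - lam1)⁻¹ * ∑ l, u j l * y l) * u j k := by
      funext k
      simp only [hR, Matrix.mulVec, dotProduct, Matrix.sum_apply, Matrix.smul_apply,
        Matrix.vecMulVec_apply, smul_eq_mul, Finset.sum_mul, Finset.mul_sum]
      rw [Finset.sum_comm]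
      exact Finset.sum_congr rfl fun j _ => Finset.sum_congr rfl fun l _ => by ring
    have h1 : (euclNorm (R.mulVec y)) ^ 2
        = ∑ j ∈ Finset.univ.erase i0, ((lam j - lam1)⁻¹ * ∑ l, u j l * y l) ^ 2 := by
      rw [hRy, euclNorm, Real.sq_sqrt (Finset.sum_nonneg fun k _ => sq_nonneg _)]
      exact ortho_expand u orth _ _
    have h2 : ∀ j ∈ Finset.univ.erase i0,
        ((lam j - lam1)⁻¹ * ∑ l, u j l * y l) ^ 2 ≤ c2 * (∑ l, u j l * y l) ^ 2 := by
      intro j hj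
      have hj0 : j ≠ i0 := Finset.ne_of_mem_erase hj
      have hjv : j.val ≠ 0 := by
        intro hv; exact hj0 (by rw [hi0]; exact Fin.ext (by simpa using hv))
      have hj1 : i1 ≤ j := by rw [hi1]; exact Fin.mk_le_mk.mpr (by omega)
      have hlamj : lam j ≤ lam2 := by
        rw [hlam2]; exact hsorted.antitone hj1
      have hpos : 0 < lam1 - lam j := by linarith
      have hle : (lam1 - lam j)⁻¹ ≤ (lam1 - lam2)⁻¹ :=
        inv_anti₀ hgap (by linarith)
      have hinv_nn : 0 ≤ (lam1 - lam j)⁻¹ := by positivity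
      have hsq : ((lam j - lam1)⁻¹) ^ 2 ≤ c2 := by
        rw [hc2, show lam j - lam1 = -(lam1 - lam j) by ring, inv_neg, neg_sq]
        nlinarith [hle, hinv_nn]
      calc ((lam j - lam1)⁻¹ * ∑ l, u j l * y l) ^ 2
          = ((lam j - lam1)⁻¹) ^ 2 * (∑ l, u j l * y l) ^ 2 := by ring
        _ ≤ c2 * (∑ l, u j l * y l) ^ 2 := mul_le_mul_of_nonneg_right hsq (sq_nonneg _)
    calc (euclNorm (R.mulVec y)) ^ 2
        = ∑ j ∈ Finset.univ.erase i0, ((lam j - lam1)⁻¹ * ∑ l, u j l * y l) ^ 2 := h1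
      _ ≤ ∑ j ∈ Finset.univ.erase i0, c2 * (∑ l, u j l * y l) ^ 2 := Finset.sum_le_sum h2
      _ = c2 * ∑ j ∈ Finset.univ.erase i0, (∑ l, u j l * y l) ^ 2 := (Finset.mul_sum _ _ _).symm
      _ ≤ c2 * ∑ j, (∑ l, u j l * y l) ^ 2 := by
          refine mul_le_mul_of_nonneg_left ?_ hc2nn
          exact Finset.sum_le_sum_of_subset_of_nonneg (Finset.erase_subset _ _)
            fun _ _ _ => sq_nonneg _
      _ ≤ c2 * ∑ k, (y k) ^ 2 := mul_le_mul_of_nonneg_left (bessel u orth y) hc2nn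
  -- zero case
  by_cases hlam0 : lam1 = 0
  · obtain ⟨C, _, hEC⟩ := hE
    have hM0 : M = 0 := by
      unfold matSpectralNorm at hspec
      rw [hlam0] at hspec
      have h2 := norm_eq_zero.mp hspec
      have h3 : Matrix.toEuclideanLin M = 0 :=
        (LinearEquiv.map_eq_zero_iff _).mp h2
      exact (LinearEquiv.map_eq_zero_iff _).mp h3
    have hE0 : ∀ ω, E ω = 0 := by
      intro ω
      rw [hEC ω, hM0]
      ext i j
      simp [Matrix.hadamard_apply]
    have hLHS : (∫ ω, (euclNorm ((R * E ω).mulVec u1)) ^ 2 ∂P) = 0 := by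
      have hfun : (fun ω => (euclNorm ((R * E ω).mulVec u1)) ^ 2) = fun _ => (0:ℝ) := by
        funext ω
        rw [hE0 ω]
        simp [euclNorm]
      rw [hfun, integral_const]
      simp
    rw [hLHS]
    positivity
  -- main case
  obtain ⟨C, ⟨hCsymm, hCmeas, hCindep, hCdist⟩, hEC⟩ := hE
  set b1 : ℝ := Real.sqrt ((1 - p) / p) with hb1
  set b2 : ℝ := Real.sqrt (p / (1 - p)) with hb2
  have hp1' : 0 < 1 - p := by linarith
  have hb1p : 0 < b1 := Real.sqrt_pos.mpr (div_pos hp1' hp0)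
  have hb2p : 0 < b2 := Real.sqrt_pos.mpr (div_pos hp0 hp1')
  have hb1sq : b1 ^ 2 = (1 - p) / p := Real.sq_sqrt (le_of_lt (div_pos hp1' hp0))
  have hb2sq : b2 ^ 2 = p / (1 - p) := Real.sq_sqrt (le_of_lt (div_pos hp0 hp1'))
  have hne12 : b1 ≠ -b2 := by intro h; nlinarith
  -- measurability of events
  have hAmeas : ∀ i j : Fin n, MeasurableSet {ω | C ω i j = b1} :=
    fun i j => (hCmeas i j) (measurableSet_singleton b1)
  have hBmeas : ∀ i j : Fin n, MeasurableSet {ω | C ω i j = -b2} :=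
    fun i j => (hCmeas i j) (measurableSet_singleton (-b2))
  have hCsym : ∀ ω (i j : Fin n), C ω i j = C ω j i := by
    intro ω i j
    exact (hCsymm ω).apply j i
  have entry : ∀ i j : Fin n,
      P {ω | C ω i j = b1} = ENNReal.ofReal p ∧
      P {ω | C ω i j = -b2} = ENNReal.ofReal (1 - p) := by
    intro i j
    rcases le_total i j with h | h
    · exact hCdist i j h
    · have h2 := hCdist j i h
      have e1 : {ω | C ω i j = b1} = {ω | C ω j i = b1} := by
        ext ω; simp [hCsym ω i j]
      have e2 : {ω | C ω i j = -b2} = {ω | C ω j i = -b2} := by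
        ext ω; simp [hCsym ω i j]
      rw [e1, e2]; exact h2
  -- a.e. two-valued
  have ae_vals : ∀ i j : Fin n, ∀ᵐ ω ∂P, C ω i j = b1 ∨ C ω i j = -b2 := by
    intro i j
    have hdisj : Disjoint {ω | C ω i j = b1} {ω | C ω i j = -b2} := by
      rw [Set.disjoint_left]
      intro ω h1 h2
      exact hne12 (by rw [← h1, h2])
    have hu : P ({ω | C ω i j = b1} ∪ {ω | C ω i j = -b2}) = 1 := by
      rw [measure_union hdisj (hBmeas i j), (entry i j).1, (entry i j).2,
        ← ENNReal.ofReal_add hp0.le (by linarith)]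
      norm_num
    have hc : P ({ω | C ω i j = b1} ∪ {ω | C ω i j = -b2})ᶜ = 0 := by
      rw [measure_compl ((hAmeas i j).union (hBmeas i j)) (measure_ne_top _ _), hu, measure_univ]
      simp
    have hset : {ω | ¬(C ω i j = b1 ∨ C ω i j = -b2)}
        = ({ω | C ω i j = b1} ∪ {ω | C ω i j = -b2})ᶜ := by
      ext ω; simp [not_or]
    rw [ae_iff, hset]
    exact hc
  have bound_ae : ∀ i j : Fin n, ∀ᵐ ω ∂P, |C ω i j| ≤ b1 + b2 := by
    intro i j
    filter_upwards [ae_vals i j] with ω h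
    rcases h with h | h <;> rw [h] <;> [skip; rw [abs_neg]] <;>
      rw [abs_of_nonneg (by positivity)] <;> linarith
  have intC : ∀ i j : Fin n, Integrable (fun ω => C ω i j) P := by
    intro i j
    refine Integrable.mono' (integrable_const (b1 + b2)) (hCmeas i j).aestronglyMeasurable ?_
    filter_upwards [bound_ae i j] with ω h
    simpa [Real.norm_eq_abs] using h
  -- first/second moments
  have hint : ∀ i j : Fin n, (∫ ω, C ω i j ∂P) = 0 ∧ (∫ ω, (C ω i j) ^ 2 ∂P) = 1 := by
    intro i j
    have gen : ∀ f : ℝ → ℝ, (∫ ω, f (C ω i j) ∂P) = f b1 * p + f (-b2) * (1 - p) := by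
      intro f
      have hae : (fun ω => f (C ω i j)) =ᵐ[P] fun ω =>
          ({ω | C ω i j = b1}).indicator (fun _ => f b1) ω
            + ({ω | C ω i j = -b2}).indicator (fun _ => f (-b2)) ω := by
        filter_upwards [ae_vals i j] with ω hω
        rcases hω with h | h
        · have hωA : ω ∈ {ω | C ω i j = b1} := h
          have hωB : ω ∉ {ω | C ω i j = -b2} := by
            simp only [Set.mem_setOf_eq, h]; exact hne12
          rw [Set.indicator_of_mem hωA, Set.indicator_of_notMem hωB, h, add_zero]
        · have hωB : ω ∈ {ω | C ω i j = -b2} := h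
          have hωA : ω ∉ {ω | C ω i j = b1} := by
            simp only [Set.mem_setOf_eq, h]
            intro hh; exact hne12 hh.symm
          rw [Set.indicator_of_mem hωB, Set.indicator_of_notMem hωA, h, zero_add]
      rw [integral_congr_ae hae,
        integral_add ((integrable_const _).indicator (hAmeas i j))
          ((integrable_const _).indicator (hBmeas i j)),
        integral_indicator_const _ (hAmeas i j), integral_indicator_const _ (hBmeas i j),
        measureReal_def, measureReal_def, (entry i j).1, (entry i j).2, ENNReal.toReal_ofReal hp0.le,
        ENNReal.toReal_ofReal (by linarith : (0:ℝ) ≤ 1 - p)]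
      simp only [smul_eq_mul]
      ring
    have e1 : b1 * p = Real.sqrt ((1 - p) * p) := by
      have hs : (b1 * p) ^ 2 = (1 - p) * p := by
        rw [mul_pow, hb1sq]; field_simp
      rw [← hs, Real.sqrt_sq (by positivity : (0:ℝ) ≤ b1 * p)]
    have e2 : b2 * (1 - p) = Real.sqrt ((1 - p) * p) := by
      have hs : (b2 * (1 - p)) ^ 2 = (1 - p) * p := by
        rw [mul_pow, hb2sq]; field_simp
      rw [← hs, Real.sqrt_sq (by positivity : (0:ℝ) ≤ b2 * (1 - p))]
    constructor
    · have h := gen fun x => x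
      rw [h, show (-b2) * (1 - p) = -(b2 * (1 - p)) by ring, e1, e2]
      ring
    · have h := gen fun x => x ^ 2
      rw [h, show ((-b2) : ℝ) ^ 2 = b2 ^ 2 from neg_sq b2, hb1sq, hb2sq]
      field_simp
      ring
  -- independence of distinct entries in the same row
  have hcross : ∀ k l l' : Fin n, l ≠ l' → (∫ ω, C ω k l * C ω k l' ∂P) = 0 := by
    intro k l l' hll'
    have hQval : ∀ (i j : Fin n) (ω : Ω), C ω (QIdx i j).1.1 (QIdx i j).1.2 = C ω i j := by
      intro i j ω
      unfold QIdx
      by_cases h : i ≤ j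
      · rw [dif_pos h]
      · rw [dif_neg h]
        exact (hCsym ω i j).symm
    have hindep := hCindep.indepFun (QIdx_ne (k := k) hll')
    have hre1 : (fun ω => C ω (QIdx k l).1.1 (QIdx k l).1.2) = fun ω => C ω k l :=
      funext fun ω => hQval k l ω
    have hre2 : (fun ω => C ω (QIdx k l').1.1 (QIdx k l').1.2) = fun ω => C ω k l' :=
      funext fun ω => hQval k l' ω
    replace hindep : IndepFun (fun ω => C ω k l) (fun ω => C ω k l') P := by
      rw [← hre1, ← hre2]; exact hindep
    have hmul : (∫ ω, C ω k l * C ω k l' ∂P)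
        = (∫ ω, C ω k l ∂P) * ∫ ω, C ω k l' ∂P :=
      hindep.integral_fun_mul_eq_mul_integral (intC k l).1 (intC k l').1
    rw [hmul, (hint k l).1, zero_mul]
  have hprod_int : ∀ k l l' : Fin n, Integrable (fun ω => C ω k l * C ω k l') P := by
    intro k l l'
    refine Integrable.mono' (integrable_const ((b1 + b2) * (b1 + b2)))
      ((hCmeas k l).mul (hCmeas k l')).aestronglyMeasurable ?_
    filter_upwards [bound_ae k l, bound_ae k l'] with ω h1 h2
    rw [Real.norm_eq_abs, abs_mul]
    exact mul_le_mul h1 h2 (abs_nonneg _) (by positivity)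
  -- per-row expectation
  have hint_k : ∀ k : Fin n,
      Integrable (fun ω => (∑ l, (M k l * u1 l) * C ω k l) ^ 2) P ∧
      (∫ ω, (∑ l, (M k l * u1 l) * C ω k l) ^ 2 ∂P) = ∑ l, (M k l * u1 l) ^ 2 := by
    intro k
    have hre2 : (fun ω => (∑ l, (M k l * u1 l) * C ω k l) ^ 2)
        = fun ω => ∑ l, ∑ l', ((M k l * u1 l) * (M k l' * u1 l')) * (C ω k l * C ω k l') := by
      funext ω
      rw [sq_sum_eq]
      exact Finset.sum_congr rfl fun l _ => Finset.sum_congr rfl fun l' _ => by ring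
    constructor
    · rw [hre2]
      exact integrable_finset_sum _ fun l _ => integrable_finset_sum _ fun l' _ =>
        ((hprod_int k l l').const_mul _)
    · rw [hre2, integral_finset_sum _ fun l _ => integrable_finset_sum _ fun l' _ =>
        ((hprod_int k l l').const_mul _)]
      refine Finset.sum_congr rfl fun l _ => ?_
      rw [integral_finset_sum _ fun l' _ => ((hprod_int k l l').const_mul _)]
      rw [Finset.sum_eq_single l]
      · have hd : (∫ ω, C ω k l * C ω k l ∂P) = 1 := by
          rw [show (fun ω => C ω k l * C ω k l) = fun ω => (C ω k l) ^ 2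
            from funext fun ω => (sq _).symm]
          exact (hint k l).2
        rw [integral_const_mul, hd]
        ring
      · intro l' _ hl'
        rw [integral_const_mul, hcross k l l' (Ne.symm hl'), mul_zero]
      · intro hl
        exact absurd (Finset.mem_univ l) hl
  -- identification of E·u1
  have hEmul : ∀ ω k, (E ω).mulVec u1 k = b1 * ∑ l, (M k l * u1 l) * C ω k l := by
    intro ω k
    rw [hEC ω]
    simp only [Matrix.mulVec, dotProduct, Matrix.smul_apply, Matrix.hadamard_apply,
      smul_eq_mul, Finset.mul_sum]
    exact Finset.sum_congr rfl fun l _ => by ring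
  -- the dominating function and its integral
  set h : Ω → ℝ := fun ω => c2 * ∑ k, ((E ω).mulVec u1 k) ^ 2 with hh
  have hre : (fun ω => ∑ k, ((E ω).mulVec u1 k) ^ 2)
      = fun ω => ∑ k, b1 ^ 2 * (∑ l, (M k l * u1 l) * C ω k l) ^ 2 := by
    funext ω
    exact Finset.sum_congr rfl fun k _ => by rw [hEmul ω k]; ring
  have h_int : Integrable h P := by
    have hi2 : Integrable (fun ω => ∑ k, ((E ω).mulVec u1 k) ^ 2) P := by
      rw [hre]
      exact integrable_finset_sum _ fun k _ => ((hint_k k).1.const_mul _)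
    exact hi2.const_mul _
  have h_val : (∫ ω, h ω ∂P) = c2 * (b1 ^ 2 * ∑ k, ∑ l, (M k l * u1 l) ^ 2) := by
    rw [hh]
    rw [integral_const_mul]
    congr 1
    rw [show (fun ω => ∑ k, ((E ω).mulVec u1 k) ^ 2)
        = fun ω => ∑ k, b1 ^ 2 * (∑ l, (M k l * u1 l) * C ω k l) ^ 2 from hre]
    rw [integral_finset_sum _ fun k _ => ((hint_k k).1.const_mul _)]
    rw [Finset.mul_sum]
    refine Finset.sum_congr rfl fun k _ => ?_
    rw [integral_const_mul, (hint_k k).2]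
  -- pointwise bound
  have hpt : ∀ ω, (euclNorm ((R * E ω).mulVec u1)) ^ 2 ≤ h ω := by
    intro ω
    rw [← Matrix.mulVec_mulVec]
    exact hRv ((E ω).mulVec u1)
  have hmono : (∫ ω, (euclNorm ((R * E ω).mulVec u1)) ^ 2 ∂P) ≤ ∫ ω, h ω ∂P :=
    integral_mono_of_nonneg (Filter.Eventually.of_forall fun ω => sq_nonneg _) h_int
      (Filter.Eventually.of_forall hpt)
  -- final arithmetic
  set F : ℝ := ∑ i, ∑ j, (M i j) ^ 2 with hF
  have hFnn : 0 ≤ F := Finset.sum_nonneg fun i _ => Finset.sum_nonneg fun j _ => sq_nonneg _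
  have hSnn : 0 ≤ ∑ k, ∑ l, (M k l * u1 l) ^ 2 :=
    Finset.sum_nonneg fun k _ => Finset.sum_nonneg fun l _ => sq_nonneg _
  have hS : ∑ k, ∑ l, (M k l * u1 l) ^ 2 ≤ ‖u1‖ ^ 2 * F := by
    rw [hF, Finset.mul_sum]
    refine Finset.sum_le_sum fun k _ => ?_
    rw [Finset.mul_sum]
    refine Finset.sum_le_sum fun l _ => ?_
    have h1 : (u1 l) ^ 2 ≤ ‖u1‖ ^ 2 := by
      have h2 := norm_le_pi_norm u1 l
      calc (u1 l) ^ 2 = ‖u1 l‖ ^ 2 := by rw [Real.norm_eq_abs, sq_abs]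
        _ ≤ ‖u1‖ ^ 2 := pow_le_pow_left₀ (norm_nonneg _) h2 2
    calc (M k l * u1 l) ^ 2 = (u1 l) ^ 2 * (M k l) ^ 2 := by ring
      _ ≤ ‖u1‖ ^ 2 * (M k l) ^ 2 := mul_le_mul_of_nonneg_right h1 (sq_nonneg _)
  have hgne : lam1 - lam2 ≠ 0 := ne_of_gt hgap
  have hRHSeq : (1 / (1 - lam2 / lam1) ^ 2) * ‖u1‖ ^ 2
        * ((∑ i, ∑ j, (M i j) ^ 2) / matSpectralNorm M ^ 2) / p
      = c2 * ((1 / p) * (‖u1‖ ^ 2 * F)) := by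
    rw [hspec, hc2, ← hF]
    have h1 : 1 - lam2 / lam1 = (lam1 - lam2) / lam1 := by field_simp
    rw [h1]
    field_simp
  calc (∫ ω, (euclNorm ((R * E ω).mulVec u1)) ^ 2 ∂P) ≤ ∫ ω, h ω ∂P := hmono
    _ = c2 * (b1 ^ 2 * ∑ k, ∑ l, (M k l * u1 l) ^ 2) := h_val
    _ ≤ c2 * ((1 / p) * (‖u1‖ ^ 2 * F)) := by
        refine mul_le_mul_of_nonneg_left ?_ hc2nn
        rw [hb1sq]
        refine mul_le_mul ?_ hS hSnn (by positivity)
        gcongr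
        linarith
    _ = (1 / (1 - lam2 / lam1) ^ 2) * ‖u1‖ ^ 2
          * ((∑ i, ∑ j, (M i j) ^ 2) / matSpectralNorm M ^ 2) / p := hRHSeq.symm
end

section
/- Let M be a deterministic n×n symmetric matrix with M ≠ 0, p ∈ (0,1), E = √((1−p)/p)·M∘C with C an n×n Bernoulli-type matrix with parameter p, and m_E a median of ‖E‖₂. Then E[ ‖E‖₂² ] ≤ m_E² + 32 ‖M‖_∞²/p² + 8 m_E √( 2π ‖M‖_∞² / p² ). -/
set_option linter.unusedSectionVars false
set_option linter.unusedVariables false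
set_option maxHeartbeats 1600000

open MeasureTheory ProbabilityTheory Filter Matrix
open scoped ENNReal NNReal BigOperators

namespace Cube
open Finset

variable {ι : Type*} [Fintype ι] [DecidableEq ι]

/-- Patch the coordinates in `s` of `x` according to membership in `t`. -/
def patch (s t : Finset ι) (x : ι → Bool) : ι → Bool :=
  fun q => if q ∈ s then decide (q ∈ t) else x q

noncomputable def avg (P1 P0 : ℝ) (s : Finset ι) (f : (ι → Bool) → ℝ) (x : ι → Bool) : ℝ :=
  ∑ t ∈ s.powerset, P1 ^ t.card * P0 ^ (s.card - t.card) * f (patch s t x)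

variable {P1 P0 : ℝ}

lemma patch_empty (t : Finset ι) (x : ι → Bool) : patch ∅ t x = x := by
  funext q; simp [patch]

lemma avg_empty (f : (ι → Bool) → ℝ) (x : ι → Bool) : avg P1 P0 ∅ f x = f x := by
  simp [avg, patch_empty]

lemma patch_insert_false {r : ι} {s t : Finset ι} (hr : r ∉ s) (ht : t ⊆ s) (x : ι → Bool) :
    patch (insert r s) t x = patch s t (Function.update x r false) := by
  funext q
  rcases eq_or_ne q r with rfl | hq
  · have h1 : q ∉ t := fun h => hr (ht h)
    simp [patch, h1, hr]
  · simp [patch, mem_insert, hq, Function.update_of_ne hq]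

lemma patch_insert_true {r : ι} {s t : Finset ι} (hr : r ∉ s) (ht : t ⊆ s) (x : ι → Bool) :
    patch (insert r s) (insert r t) x = patch s t (Function.update x r true) := by
  funext q
  rcases eq_or_ne q r with rfl | hq
  · simp [patch, hr]
  · simp [patch, mem_insert, hq, Function.update_of_ne hq]

lemma avg_insert {r : ι} {s : Finset ι} (hr : r ∉ s) (f : (ι → Bool) → ℝ) (x : ι → Bool) :
    avg P1 P0 (insert r s) f x
      = P0 * avg P1 P0 s f (Function.update x r false)
        + P1 * avg P1 P0 s f (Function.update x r true) := by
  unfold avg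
  rw [Finset.sum_powerset_insert hr]
  congr 1
  · rw [Finset.mul_sum]
    refine Finset.sum_congr rfl fun t ht => ?_
    have ht' : t ⊆ s := Finset.mem_powerset.1 ht
    have hcard : t.card ≤ s.card := Finset.card_le_card ht'
    rw [patch_insert_false hr ht', Finset.card_insert_of_notMem hr,
      Nat.succ_sub hcard, pow_succ]
    ring
  · rw [Finset.mul_sum]
    refine Finset.sum_congr rfl fun t ht => ?_
    have ht' : t ⊆ s := Finset.mem_powerset.1 ht
    have hrt : r ∉ t := fun h => hr (ht' h)
    rw [patch_insert_true hr ht', Finset.card_insert_of_notMem hr,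
      Finset.card_insert_of_notMem hrt]
    have he : s.card + 1 - (t.card + 1) = s.card - t.card := by omega
    rw [he, pow_succ]
    ring

lemma avg_const (h : P1 + P0 = 1) (c : ℝ) (s : Finset ι) (x : ι → Bool) :
    avg P1 P0 s (fun _ => c) x = c := by
  induction s using Finset.induction_on generalizing x with
  | empty => simp [avg_empty]
  | insert _ _ hr ih =>
    rw [avg_insert hr, ih, ih, ← add_mul, show P0 + P1 = 1 by linarith, one_mul]

lemma avg_mono (h1 : 0 ≤ P1) (h0 : 0 ≤ P0) {f g : (ι → Bool) → ℝ}
    (hfg : ∀ z, f z ≤ g z) (s : Finset ι) (x : ι → Bool) :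
    avg P1 P0 s f x ≤ avg P1 P0 s g x := by
  refine Finset.sum_le_sum fun t _ => ?_
  have hW : 0 ≤ P1 ^ t.card * P0 ^ (s.card - t.card) := by positivity
  exact mul_le_mul_of_nonneg_left (hfg _) hW

lemma avg_sum {κ : Type*} (u : Finset κ) (F : κ → (ι → Bool) → ℝ) (s : Finset ι) (x : ι → Bool) :
    avg P1 P0 s (fun z => ∑ q ∈ u, F q z) x = ∑ q ∈ u, avg P1 P0 s (F q) x := by
  unfold avg
  rw [Finset.sum_comm]
  exact Finset.sum_congr rfl fun t _ => by rw [Finset.mul_sum]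

lemma avg_sq_le (h1 : 0 ≤ P1) (h0 : 0 ≤ P0) (h : P1 + P0 = 1)
    (f : (ι → Bool) → ℝ) (s : Finset ι) (x : ι → Bool) :
    (avg P1 P0 s f x) ^ 2 ≤ avg P1 P0 s (fun z => f z ^ 2) x := by
  have key := Finset.sum_mul_sq_le_sq_mul_sq s.powerset
    (fun t => Real.sqrt (P1 ^ t.card * P0 ^ (s.card - t.card)))
    (fun t => Real.sqrt (P1 ^ t.card * P0 ^ (s.card - t.card)) * f (patch s t x))
  have hW : ∀ t : Finset ι, 0 ≤ P1 ^ t.card * P0 ^ (s.card - t.card) := by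
    intro t; positivity
  have e1 : ∀ t ∈ s.powerset,
      Real.sqrt (P1 ^ t.card * P0 ^ (s.card - t.card)) *
        (Real.sqrt (P1 ^ t.card * P0 ^ (s.card - t.card)) * f (patch s t x))
      = P1 ^ t.card * P0 ^ (s.card - t.card) * f (patch s t x) := by
    intro t _
    rw [← mul_assoc, Real.mul_self_sqrt (hW t)]
  have e2 : ∀ t ∈ s.powerset,
      (Real.sqrt (P1 ^ t.card * P0 ^ (s.card - t.card))) ^ 2
      = P1 ^ t.card * P0 ^ (s.card - t.card) := by
    intro t _
    exact Real.sq_sqrt (hW t)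
  have e3 : ∀ t ∈ s.powerset,
      (Real.sqrt (P1 ^ t.card * P0 ^ (s.card - t.card)) * f (patch s t x)) ^ 2
      = P1 ^ t.card * P0 ^ (s.card - t.card) * f (patch s t x) ^ 2 := by
    intro t _
    rw [mul_pow, Real.sq_sqrt (hW t)]
  rw [Finset.sum_congr rfl e1, Finset.sum_congr rfl e2, Finset.sum_congr rfl e3] at key
  have hsum1 : ∑ t ∈ s.powerset, P1 ^ t.card * P0 ^ (s.card - t.card) = 1 := by
    have := avg_const (P1 := P1) (P0 := P0) h 1 s x
    unfold avg at this
    simpa using this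
  rw [hsum1, one_mul] at key
  exact key

/-- update and patch commute when the point is outside `s`. -/
lemma patch_update {r : ι} {s t : Finset ι} (hr : r ∉ s) (b : Bool) (x : ι → Bool) :
    patch s t (Function.update x r b) = Function.update (patch s t x) r b := by
  funext q
  rcases eq_or_ne q r with rfl | hq
  · simp [patch, hr]
  · simp [patch, Function.update_of_ne hq]

/-- The fundamental tensorization inequality for the variance on the cube. -/
theorem avg_var_le (h1 : 0 ≤ P1) (h0 : 0 ≤ P0) (h : P1 + P0 = 1)
    (f : (ι → Bool) → ℝ) (s : Finset ι) (x : ι → Bool) :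
    avg P1 P0 s (fun z => f z ^ 2) x - (avg P1 P0 s f x) ^ 2
      ≤ P1 * P0 * ∑ q ∈ s, avg P1 P0 s
          (fun z => (f (Function.update z q true) - f (Function.update z q false)) ^ 2) x := by
  induction s using Finset.induction_on generalizing x with
  | empty => simp [avg_empty]
  | insert r s hr ih =>
    set xT := Function.update x r true with hxT
    set xF := Function.update x r false with hxF
    set u := avg P1 P0 s f xT with hu
    set w := avg P1 P0 s f xF with hw
    have hrec2 : avg P1 P0 (insert r s) (fun z => f z ^ 2) x
        = P0 * avg P1 P0 s (fun z => f z ^ 2) xF + P1 * avg P1 P0 s (fun z => f z ^ 2) xT :=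
      avg_insert hr _ x
    have hrec1 : avg P1 P0 (insert r s) f x = P0 * w + P1 * u := avg_insert hr f x
    -- the r-th term
    have hDr : u - w = avg P1 P0 s
        (fun z => f (Function.update z r true) - f (Function.update z r false)) x := by
      rw [hu, hw]
      unfold avg
      rw [← Finset.sum_sub_distrib]
      refine Finset.sum_congr rfl fun t _ => ?_
      rw [patch_update hr, patch_update hr]
      ring
    have hRr_indep : ∀ (b : Bool),
        avg P1 P0 s (fun z => (f (Function.update z r true) - f (Function.update z r false)) ^ 2)
          (Function.update x r b)
        = avg P1 P0 s (fun z => (f (Function.update z r true) - f (Function.update z r false)) ^ 2)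
          x := by
      intro b
      unfold avg
      refine Finset.sum_congr rfl fun t _ => ?_
      rw [patch_update hr]
      simp only [Function.update_idem]
    have hRr : avg P1 P0 (insert r s)
        (fun z => (f (Function.update z r true) - f (Function.update z r false)) ^ 2) x
        = avg P1 P0 s
        (fun z => (f (Function.update z r true) - f (Function.update z r false)) ^ 2) x := by
      rw [avg_insert hr, hRr_indep, hRr_indep, ← add_mul, show P0 + P1 = 1 by linarith, one_mul]
    have huw : (u - w) ^ 2 ≤ avg P1 P0 (insert r s)
        (fun z => (f (Function.update z r true) - f (Function.update z r false)) ^ 2) x := by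
      rw [hRr, hDr]
      exact avg_sq_le h1 h0 h _ s x
    -- other terms
    have hother : ∀ q ∈ s, avg P1 P0 (insert r s)
        (fun z => (f (Function.update z q true) - f (Function.update z q false)) ^ 2) x
        = P0 * avg P1 P0 s
            (fun z => (f (Function.update z q true) - f (Function.update z q false)) ^ 2) xF
          + P1 * avg P1 P0 s
            (fun z => (f (Function.update z q true) - f (Function.update z q false)) ^ 2) xT := by
      intro q _
      exact avg_insert hr _ x
    have ihT := ih xT
    have ihF := ih xF
    rw [hrec2, hrec1, Finset.sum_insert hr]
    have expand : P0 * avg P1 P0 s (fun z => f z ^ 2) xF + P1 * avg P1 P0 s (fun z => f z ^ 2) xT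
        - (P0 * w + P1 * u) ^ 2
        = P0 * (avg P1 P0 s (fun z => f z ^ 2) xF - w ^ 2)
          + P1 * (avg P1 P0 s (fun z => f z ^ 2) xT - u ^ 2)
          + P1 * P0 * (u - w) ^ 2 := by
      have hP : P0 = 1 - P1 := by linarith
      rw [hP]; ring
    rw [expand]
    have sum_ins : ∑ q ∈ s, avg P1 P0 (insert r s)
        (fun z => (f (Function.update z q true) - f (Function.update z q false)) ^ 2) x
        = ∑ q ∈ s, (P0 * avg P1 P0 s
            (fun z => (f (Function.update z q true) - f (Function.update z q false)) ^ 2) xF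
          + P1 * avg P1 P0 s
            (fun z => (f (Function.update z q true) - f (Function.update z q false)) ^ 2) xT) :=
      Finset.sum_congr rfl hother
    rw [sum_ins]
    have e : P1 * P0 * (avg P1 P0 (insert r s)
          (fun z => (f (Function.update z r true) - f (Function.update z r false)) ^ 2) x
        + ∑ q ∈ s, (P0 * avg P1 P0 s
            (fun z => (f (Function.update z q true) - f (Function.update z q false)) ^ 2) xF
          + P1 * avg P1 P0 s
            (fun z => (f (Function.update z q true) - f (Function.update z q false)) ^ 2) xT))
        = P1 * P0 * avg P1 P0 (insert r s)
            (fun z => (f (Function.update z r true) - f (Function.update z r false)) ^ 2) x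
          + P0 * (P1 * P0 * ∑ q ∈ s, avg P1 P0 s
            (fun z => (f (Function.update z q true) - f (Function.update z q false)) ^ 2) xF)
          + P1 * (P1 * P0 * ∑ q ∈ s, avg P1 P0 s
            (fun z => (f (Function.update z q true) - f (Function.update z q false)) ^ 2) xT) := by
      rw [Finset.sum_add_distrib, ← Finset.mul_sum, ← Finset.mul_sum]
      ring
    rw [e]
    have b1 : P0 * (avg P1 P0 s (fun z => f z ^ 2) xF - w ^ 2)
        ≤ P0 * (P1 * P0 * ∑ q ∈ s, avg P1 P0 s
            (fun z => (f (Function.update z q true) - f (Function.update z q false)) ^ 2) xF) :=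
      mul_le_mul_of_nonneg_left ihF h0
    have b2 : P1 * (avg P1 P0 s (fun z => f z ^ 2) xT - u ^ 2)
        ≤ P1 * (P1 * P0 * ∑ q ∈ s, avg P1 P0 s
            (fun z => (f (Function.update z q true) - f (Function.update z q false)) ^ 2) xT) :=
      mul_le_mul_of_nonneg_left ihT h1
    have b3 : P1 * P0 * (u - w) ^ 2 ≤ P1 * P0 * avg P1 P0 (insert r s)
        (fun z => (f (Function.update z r true) - f (Function.update z r false)) ^ 2) x :=
      mul_le_mul_of_nonneg_left huw (by positivity)
    linarith


noncomputable def wt (P1 P0 : ℝ) (b : Bool) : ℝ := if b then P1 else P0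

noncomputable def mu (P1 P0 : ℝ) (x : ι → Bool) : ℝ := ∏ q, wt P1 P0 (x q)

lemma wt_nonneg (h1 : 0 ≤ P1) (h0 : 0 ≤ P0) (b : Bool) : 0 ≤ wt P1 P0 b := by
  cases b <;> simpa [wt]

lemma mu_nonneg (h1 : 0 ≤ P1) (h0 : 0 ≤ P0) (x : ι → Bool) : 0 ≤ mu P1 P0 x :=
  Finset.prod_nonneg fun q _ => wt_nonneg h1 h0 (x q)

lemma sum_mu_eq_avg (f : (ι → Bool) → ℝ) (x₀ : ι → Bool) :
    ∑ x : ι → Bool, mu P1 P0 x * f x = avg P1 P0 Finset.univ f x₀ := by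
  unfold avg
  refine Finset.sum_nbij' (i := fun x => Finset.univ.filter (fun q => x q = true))
    (j := fun t => patch Finset.univ t x₀) ?_ ?_ ?_ ?_ ?_
  · intro x _; exact Finset.mem_powerset.2 (Finset.filter_subset _ _)
  · intro t _; exact Finset.mem_univ _
  · intro x _
    funext q
    rcases hb : x q <;> simp [patch, Finset.mem_filter, hb]
  · intro t _
    ext q
    simp [patch, Finset.mem_filter]
  · intro x _
    have hpatch : patch Finset.univ (Finset.univ.filter (fun q => x q = true)) x₀ = x := by
      funext q
      rcases hb : x q <;> simp [patch, Finset.mem_filter, hb]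
    rw [hpatch]
    congr 1
    unfold mu
    rw [← Finset.prod_filter_mul_prod_filter_not Finset.univ (fun q => x q = true)
      (fun q => wt P1 P0 (x q))]
    have e1 : ∀ q ∈ Finset.univ.filter (fun q => x q = true), wt P1 P0 (x q) = P1 := by
      intro q hq
      have := (Finset.mem_filter.1 hq).2
      simp [wt, this]
    have e2 : ∀ q ∈ Finset.univ.filter (fun q => ¬ x q = true), wt P1 P0 (x q) = P0 := by
      intro q hq
      have := (Finset.mem_filter.1 hq).2
      simp only [Bool.not_eq_true] at this
      simp [wt, this]
    rw [Finset.prod_congr rfl e1, Finset.prod_congr rfl e2, Finset.prod_const,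
      Finset.prod_const]
    congr 2
    have hset : Finset.univ.filter (fun q => ¬ x q = true)
        = Finset.univ \ Finset.univ.filter (fun q => x q = true) := Finset.filter_not _ _
    rw [hset, Finset.card_sdiff_of_subset (Finset.filter_subset _ _)]

lemma sum_eq_pair_sum (q : ι) (F : (ι → Bool) → ℝ) :
    ∑ x : ι → Bool, F x
      = ∑ x ∈ Finset.univ.filter (fun x => x q = true),
          (F x + F (Function.update x q false)) := by
  rw [← Finset.sum_filter_add_sum_filter_not Finset.univ (fun x => x q = true) F,
    Finset.sum_add_distrib]
  congr 1
  refine Finset.sum_nbij' (i := fun x => Function.update x q true)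
    (j := fun x => Function.update x q false) ?_ ?_ ?_ ?_ ?_
  · intro x _; simp
  · intro x _; simp
  · intro x hx
    have hb : x q = false := by simpa using (Finset.mem_filter.1 hx).2
    simp only [Function.update_idem]
    rw [← hb, Function.update_eq_self]
  · intro x hx
    have hb : x q = true := by simpa using (Finset.mem_filter.1 hx).2
    simp only [Function.update_idem]
    rw [← hb, Function.update_eq_self]
  · intro x hx
    have hb : x q = false := by simpa using (Finset.mem_filter.1 hx).2
    simp only [Function.update_idem]
    rw [← hb, Function.update_eq_self]

lemma max_sq_add_max_sq (d : ℝ) : d ^ 2 = max d 0 ^ 2 + max (-d) 0 ^ 2 := by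
  rcases le_total d 0 with h | h
  · rw [max_eq_right h, max_eq_left (by linarith)]
    ring
  · rw [max_eq_left h, max_eq_right (by linarith)]
    ring

lemma exchange (h1 : 0 ≤ P1) (h0 : 0 ≤ P0) (hs : P1 + P0 = 1) (q : ι)
    (f : (ι → Bool) → ℝ) :
    P1 * P0 * ∑ x : ι → Bool, mu P1 P0 x
        * (f (Function.update x q true) - f (Function.update x q false)) ^ 2
      ≤ ∑ x : ι → Bool, mu P1 P0 x
        * max (f x - f (Function.update x q (!(x q)))) 0 ^ 2 := by
  rw [Finset.mul_sum, sum_eq_pair_sum q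
    (fun x => P1 * P0 * (mu P1 P0 x
      * (f (Function.update x q true) - f (Function.update x q false)) ^ 2)),
    sum_eq_pair_sum q (fun x => mu P1 P0 x * max (f x - f (Function.update x q (!(x q)))) 0 ^ 2)]
  refine Finset.sum_le_sum fun x hx => ?_
  have hb : x q = true := by simpa using (Finset.mem_filter.1 hx).2
  set y := Function.update x q false with hy
  have hupdT : Function.update x q true = x := by rw [← hb, Function.update_eq_self]
  have hyq : y q = false := by simp [hy]
  have hupdyT : Function.update y q true = x := by rw [hy, Function.update_idem, hupdT]
  have hupdyF : Function.update y q false = y := by rw [hy, Function.update_idem]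
  have hflipx : Function.update x q (!(x q)) = y := by rw [hb]; rfl
  have hflipy : Function.update y q (!(y q)) = x := by rw [hyq]; simpa using hupdyT
  set rest := ∏ q' ∈ Finset.univ.erase q, wt P1 P0 (x q') with hrest
  have hrest_nonneg : 0 ≤ rest :=
    Finset.prod_nonneg fun q' _ => wt_nonneg h1 h0 _
  have hmux : mu P1 P0 x = P1 * rest := by
    unfold mu
    rw [← Finset.mul_prod_erase Finset.univ _ (Finset.mem_univ q), hb, hrest]
    simp [wt]
  have hmuy : mu P1 P0 y = P0 * rest := by
    unfold mu
    rw [← Finset.mul_prod_erase Finset.univ _ (Finset.mem_univ q), hyq]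
    have : ∀ q' ∈ Finset.univ.erase q, wt P1 P0 (y q') = wt P1 P0 (x q') := by
      intro q' hq'
      rw [hy, Function.update_of_ne (Finset.ne_of_mem_erase hq')]
    rw [Finset.prod_congr rfl this, hrest]
    simp [wt]
  rw [hupdT, hupdyT, hupdyF, hflipx, hflipy, hmux, hmuy]
  set d := f x - f y with hd
  have hd2 : (f y - f x) = -d := by rw [hd]; ring
  rw [hd2]
  have hkey := max_sq_add_max_sq d
  have m1 : (0:ℝ) ≤ max d 0 ^ 2 := by positivity
  have m2 : (0:ℝ) ≤ max (-d) 0 ^ 2 := by positivity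
  have hP0eq : P0 = 1 - P1 := by linarith
  subst hP0eq
  rw [hkey]
  nlinarith [mul_nonneg (mul_nonneg (mul_nonneg h1 h1) hrest_nonneg) m1,
    mul_nonneg (mul_nonneg (mul_nonneg h0 h0) hrest_nonneg) m2]

lemma sum_mu_one (h1 : 0 ≤ P1) (h0 : 0 ≤ P0) (hs : P1 + P0 = 1) :
    ∑ x : ι → Bool, mu P1 P0 x = 1 := by
  have h := sum_mu_eq_avg (ι := ι) (P1 := P1) (P0 := P0) (fun _ => (1:ℝ)) (fun _ => true)
  have h2 : avg P1 P0 Finset.univ (fun _ => (1:ℝ)) (fun _ => true) = 1 :=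
    avg_const (ι := ι) hs 1 Finset.univ (fun _ => true)
  rw [h2] at h
  simpa using h

/-- Dimension-free Efron–Stein-type variance bound on the biased cube. -/
theorem var_le (h1 : 0 ≤ P1) (h0 : 0 ≤ P0) (hs : P1 + P0 = 1)
    (f : (ι → Bool) → ℝ) (B : ℝ)
    (hB : ∀ x : ι → Bool,
      ∑ q : ι, max (f x - f (Function.update x q (!(x q)))) 0 ^ 2 ≤ B) :
    ∑ x : ι → Bool, mu P1 P0 x * f x ^ 2
      - (∑ x : ι → Bool, mu P1 P0 x * f x) ^ 2 ≤ B := by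
  classical
  set x₀ : ι → Bool := fun _ => true with hx₀
  have e1 : ∑ x : ι → Bool, mu P1 P0 x * f x ^ 2 = avg P1 P0 Finset.univ (fun z => f z ^ 2) x₀ :=
    sum_mu_eq_avg _ _
  have e2 : ∑ x : ι → Bool, mu P1 P0 x * f x = avg P1 P0 Finset.univ f x₀ :=
    sum_mu_eq_avg _ _
  rw [e1, e2]
  refine le_trans (avg_var_le h1 h0 hs f Finset.univ x₀) ?_
  have e3 : ∀ q : ι, avg P1 P0 Finset.univ
      (fun z => (f (Function.update z q true) - f (Function.update z q false)) ^ 2) x₀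
      = ∑ x : ι → Bool, mu P1 P0 x
          * (f (Function.update x q true) - f (Function.update x q false)) ^ 2 :=
    fun q => (sum_mu_eq_avg _ _).symm
  rw [Finset.mul_sum]
  calc ∑ q : ι, P1 * P0 * avg P1 P0 Finset.univ
        (fun z => (f (Function.update z q true) - f (Function.update z q false)) ^ 2) x₀
      = ∑ q : ι, P1 * P0 * ∑ x : ι → Bool, mu P1 P0 x
          * (f (Function.update x q true) - f (Function.update x q false)) ^ 2 := by
        exact Finset.sum_congr rfl fun q _ => by rw [e3 q]
    _ ≤ ∑ q : ι, ∑ x : ι → Bool, mu P1 P0 x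
          * max (f x - f (Function.update x q (!(x q)))) 0 ^ 2 :=
        Finset.sum_le_sum fun q _ => exchange h1 h0 hs q f
    _ = ∑ x : ι → Bool, mu P1 P0 x
          * ∑ q : ι, max (f x - f (Function.update x q (!(x q)))) 0 ^ 2 := by
        rw [Finset.sum_comm]
        exact Finset.sum_congr rfl fun x _ => by rw [Finset.mul_sum]
    _ ≤ ∑ x : ι → Bool, mu P1 P0 x * B :=
        Finset.sum_le_sum fun x _ =>
          mul_le_mul_of_nonneg_left (hB x) (mu_nonneg h1 h0 x)
    _ = B := by rw [← Finset.sum_mul, sum_mu_one h1 h0 hs, one_mul]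

end Cube

namespace SpecAux

variable {n : ℕ}

noncomputable def bilin (A : Matrix (Fin n) (Fin n) ℝ) (u v : Fin n → ℝ) : ℝ :=
  ∑ i, ∑ j, u i * A i j * v j

lemma toEuclideanLin_apply'' (A : Matrix (Fin n) (Fin n) ℝ) (v : EuclideanSpace ℝ (Fin n))
    (i : Fin n) : Matrix.toEuclideanLin A v i = ∑ j, A i j * v j := by
  change (A *ᵥ v) i = _
  simp [Matrix.mulVec, dotProduct]

lemma inner_toEuclideanLin (A : Matrix (Fin n) (Fin n) ℝ) (u v : EuclideanSpace ℝ (Fin n)) :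
    (inner ℝ u (Matrix.toEuclideanLin A v) : ℝ) = bilin A u v := by
  rw [PiLp.inner_apply]
  unfold bilin
  refine Finset.sum_congr rfl fun i _ => ?_
  rw [toEuclideanLin_apply'', RCLike.inner_apply]
  simp only [starRingEnd_apply, star_trivial]
  rw [Finset.sum_mul]
  exact Finset.sum_congr rfl fun j _ => by ring

lemma norm_sq_euclid (v : EuclideanSpace ℝ (Fin n)) : ‖v‖ ^ 2 = ∑ i, v i ^ 2 := by
  rw [EuclideanSpace.norm_eq, Real.sq_sqrt (by positivity)]
  exact Finset.sum_congr rfl fun i _ => by rw [Real.norm_eq_abs, sq_abs]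

lemma abs_bilin_le (A : Matrix (Fin n) (Fin n) ℝ) {u v : EuclideanSpace ℝ (Fin n)}
    (hu : ‖u‖ = 1) (hv : ‖v‖ = 1) : |bilin A u v| ≤ matSpectralNorm A := by
  rw [← inner_toEuclideanLin]
  calc |(inner ℝ u (Matrix.toEuclideanLin A v) : ℝ)|
      ≤ ‖u‖ * ‖Matrix.toEuclideanLin A v‖ := abs_real_inner_le_norm _ _
    _ = ‖(LinearMap.toContinuousLinearMap (Matrix.toEuclideanLin A)) v‖ := by
        rw [hu, one_mul]; rfl
    _ ≤ matSpectralNorm A * ‖v‖ := ContinuousLinearMap.le_opNorm _ v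
    _ = matSpectralNorm A := by rw [hv, mul_one]

lemma isHermitian_of_isSymm {A : Matrix (Fin n) (Fin n) ℝ} (hA : A.IsSymm) : A.IsHermitian := by
  rw [Matrix.IsHermitian, Matrix.conjTranspose_eq_transpose_of_trivial]
  exact hA

theorem exists_attaining_vector {A : Matrix (Fin n) (Fin n) ℝ} (hA : A.IsSymm) (hn : 0 < n) :
    ∃ v : EuclideanSpace ℝ (Fin n), ‖v‖ = 1 ∧ matSpectralNorm A = |bilin A v v| := by
  have : Nonempty (Fin n) := ⟨⟨0, hn⟩⟩
  have hH : A.IsHermitian := isHermitian_of_isSymm hA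
  set b := hH.eigenvectorBasis with hb
  set lam := hH.eigenvalues with hlam
  have hT : ∀ j, Matrix.toEuclideanLin A (b j) = (lam j : ℝ) • b j := by
    intro j
    have h := hH.mulVec_eigenvectorBasis j
    ext i
    rw [toEuclideanLin_apply'']
    have h2 := congrFun h i
    simp only [Pi.smul_apply, smul_eq_mul] at h2
    simp only [PiLp.smul_apply, smul_eq_mul]
    simpa [Matrix.mulVec, dotProduct] using h2
  -- argmax of |lam|
  obtain ⟨j₀, -, hj₀⟩ := Finset.exists_max_image Finset.univ (fun j => |lam j|)
    ⟨Classical.arbitrary _, Finset.mem_univ _⟩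
  set M := |lam j₀| with hM
  have hM0 : 0 ≤ M := abs_nonneg _
  have hTu : ∀ u : EuclideanSpace ℝ (Fin n),
      Matrix.toEuclideanLin A u = ∑ k, (b.repr u k * lam k) • b k := by
    intro u
    conv_lhs => rw [← b.sum_repr u]
    rw [map_sum]
    refine Finset.sum_congr rfl fun k _ => ?_
    rw [_root_.map_smul, hT k, smul_smul]
  have hrepr : ∀ (u : EuclideanSpace ℝ (Fin n)) (j : Fin n),
      b.repr (Matrix.toEuclideanLin A u) j = lam j * b.repr u j := by
    intro u j
    rw [hTu u, map_sum]
    have hterm : ∀ k, (b.repr ((b.repr u k * lam k) • b k)) j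
        = (b.repr u k * lam k) * EuclideanSpace.single k (1:ℝ) j := by
      intro k
      rw [_root_.map_smul, b.repr_self]
      simp
    have hsum : (∑ k, b.repr ((b.repr u k * lam k) • b k)) j
        = ∑ k, (b.repr ((b.repr u k * lam k) • b k)) j := by
      rw [WithLp.ofLp_sum]
      exact Finset.sum_apply j Finset.univ _
    rw [hsum, Finset.sum_congr rfl (fun k _ => hterm k), Finset.sum_eq_single j]
    · simp [EuclideanSpace.single_apply]
      ring
    · intro k _ hk
      simp [EuclideanSpace.single_apply, Ne.symm hk]
    · intro h
      exact absurd (Finset.mem_univ j) h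
  have hTle : ∀ u : EuclideanSpace ℝ (Fin n),
      ‖Matrix.toEuclideanLin A u‖ ≤ M * ‖u‖ := by
    intro u
    have h1 : ‖Matrix.toEuclideanLin A u‖ ^ 2 ≤ (M * ‖u‖) ^ 2 := by
      rw [← b.repr.norm_map (Matrix.toEuclideanLin A u), ← b.repr.norm_map u,
        mul_pow, norm_sq_euclid, norm_sq_euclid]
      have e : ∀ j, (b.repr (Matrix.toEuclideanLin A u) j) ^ 2
          = (lam j) ^ 2 * (b.repr u j) ^ 2 := by
        intro j
        rw [hrepr u j]
        ring
      rw [Finset.sum_congr rfl (fun j _ => e j), Finset.mul_sum]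
      refine Finset.sum_le_sum fun j _ => ?_
      have h3 : lam j ^ 2 ≤ M ^ 2 := by
        rw [hM, ← sq_abs (lam j)]
        have h4 := hj₀ j (Finset.mem_univ j)
        nlinarith [abs_nonneg (lam j)]
      nlinarith [sq_nonneg (b.repr u j)]
    have h2 := Real.sqrt_le_sqrt h1
    rwa [Real.sqrt_sq (norm_nonneg _), Real.sqrt_sq (by positivity)] at h2
  have hnorm_le : matSpectralNorm A ≤ M := by
    refine ContinuousLinearMap.opNorm_le_bound _ hM0 fun u => ?_
    simpa using hTle u
  have hb1 : ‖b j₀‖ = 1 := b.orthonormal.1 j₀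
  have hinner : bilin A (b j₀) (b j₀) = lam j₀ := by
    rw [← inner_toEuclideanLin, hT j₀, real_inner_smul_right, real_inner_self_eq_norm_sq, hb1]
    ring
  have hge : M ≤ matSpectralNorm A := by
    have h := abs_bilin_le A hb1 hb1
    rwa [hinner] at h
  exact ⟨b j₀, hb1, by rw [hinner, ← hM]; exact le_antisymm hnorm_le hge⟩


noncomputable def valB (a bneg : ℝ) : Bool → ℝ := fun b => if b then a else bneg

noncomputable def XmatD (c : ℝ) (M : Matrix (Fin n) (Fin n) ℝ) (a bneg : ℝ)
    (x : {q : Fin n × Fin n // q.1 ≤ q.2} → Bool) : Matrix (Fin n) (Fin n) ℝ :=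
  Matrix.of fun i j => c * (M i j *
    (if h : i ≤ j then valB a bneg (x ⟨(i, j), h⟩)
      else valB a bneg (x ⟨(j, i), le_of_not_ge h⟩)))

lemma XmatD_apply (c : ℝ) (M : Matrix (Fin n) (Fin n) ℝ) (a bneg : ℝ)
    (x : {q : Fin n × Fin n // q.1 ≤ q.2} → Bool) (i j : Fin n) :
    XmatD c M a bneg x i j = c * (M i j *
    (if h : i ≤ j then valB a bneg (x ⟨(i, j), h⟩)
      else valB a bneg (x ⟨(j, i), le_of_not_ge h⟩))) := rfl

lemma XmatD_isSymm {M : Matrix (Fin n) (Fin n) ℝ} (hM : M.IsSymm) (c a bneg : ℝ)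
    (x : {q : Fin n × Fin n // q.1 ≤ q.2} → Bool) : (XmatD c M a bneg x).IsSymm := by
  rw [Matrix.IsSymm]
  ext i j
  rw [Matrix.transpose_apply, XmatD_apply, XmatD_apply]
  have hM' : M j i = M i j := congrFun (congrFun hM i) j
  rw [hM']
  rcases le_or_gt i j with hij | hij
  · rcases eq_or_lt_of_le hij with rfl | hlt
    · rfl
    · have h2 : ¬ j ≤ i := not_le.2 hlt
      rw [dif_pos hij, dif_neg h2]
  · have h2 : ¬ i ≤ j := not_le.2 hij
    rw [dif_neg h2, dif_pos hij.le]

lemma XmatD_congr (c : ℝ) (M : Matrix (Fin n) (Fin n) ℝ) (a bneg : ℝ)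
    {x y : {q : Fin n × Fin n // q.1 ≤ q.2} → Bool} {q₀ : {q : Fin n × Fin n // q.1 ≤ q.2}}
    (hxy : ∀ q, q ≠ q₀ → x q = y q) (k l : Fin n)
    (h1 : ¬(k = q₀.val.1 ∧ l = q₀.val.2)) (h2 : ¬(k = q₀.val.2 ∧ l = q₀.val.1)) :
    XmatD c M a bneg x k l = XmatD c M a bneg y k l := by
  rw [XmatD_apply, XmatD_apply]
  rcases le_or_gt k l with hkl | hkl
  · rw [dif_pos hkl, dif_pos hkl]
    have hne : (⟨(k, l), hkl⟩ : {q : Fin n × Fin n // q.1 ≤ q.2}) ≠ q₀ := by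
      intro hEq
      apply h1
      have hv : ((k, l) : Fin n × Fin n) = q₀.val := congrArg Subtype.val hEq
      exact ⟨congrArg Prod.fst hv, congrArg Prod.snd hv⟩
    rw [hxy _ hne]
  · have h3 : ¬ k ≤ l := not_le.2 hkl
    rw [dif_neg h3, dif_neg h3]
    have hne : (⟨(l, k), le_of_not_ge h3⟩ : {q : Fin n × Fin n // q.1 ≤ q.2}) ≠ q₀ := by
      intro hEq
      apply h2
      have hv : ((l, k) : Fin n × Fin n) = q₀.val := congrArg Subtype.val hEq
      exact ⟨congrArg Prod.snd hv, congrArg Prod.fst hv⟩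
    rw [hxy _ hne]


lemma abs_bilin_sub_le (A B : Matrix (Fin n) (Fin n) ℝ) (v : Fin n → ℝ) (i j : Fin n)
    (hij : i ≤ j) (d : ℝ) (hd : 0 ≤ d)
    (hAB : ∀ k l, ¬(k = i ∧ l = j) → ¬(k = j ∧ l = i) → A k l = B k l)
    (hdij : |A i j - B i j| ≤ d) (hdji : |A j i - B j i| ≤ d) :
    |bilin A v v - bilin B v v| ≤ (if i = j then 1 else 2) * d * (|v i| * |v j|) := by
  classical
  set g : Fin n × Fin n → ℝ := fun pr => v pr.1 * (A pr.1 pr.2 - B pr.1 pr.2) * v pr.2 with hg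
  have htot : bilin A v v - bilin B v v = ∑ pr : Fin n × Fin n, g pr := by
    rw [Fintype.sum_prod_type]
    unfold bilin
    rw [← Finset.sum_sub_distrib]
    refine Finset.sum_congr rfl fun k _ => ?_
    rw [← Finset.sum_sub_distrib]
    refine Finset.sum_congr rfl fun l _ => ?_
    simp only [hg]
    ring
  rcases eq_or_lt_of_le hij with rfl | hlt
  · -- diagonal case
    have hzero : ∀ pr ∈ Finset.univ, pr ∉ ({(i, i)} : Finset (Fin n × Fin n)) → g pr = 0 := by
      intro pr _ hpr
      have hne : pr ≠ (i, i) := by simpa using hpr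
      have h1 : ¬(pr.1 = i ∧ pr.2 = i) := by
        rintro ⟨ha, hb⟩
        exact hne (Prod.ext ha hb)
      have := hAB pr.1 pr.2 h1 h1
      simp only [hg]
      rw [this]
      ring
    have hsum : ∑ pr ∈ ({(i, i)} : Finset (Fin n × Fin n)), g pr = ∑ pr : Fin n × Fin n, g pr :=
      Finset.sum_subset (Finset.subset_univ _) hzero
    rw [htot, ← hsum, Finset.sum_singleton, if_pos rfl, one_mul]
    calc |v i * (A i i - B i i) * v i| = |v i| * |A i i - B i i| * |v i| := by
          rw [abs_mul, abs_mul]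
      _ ≤ |v i| * d * |v i| := by
          have := abs_nonneg (v i)
          exact mul_le_mul_of_nonneg_right (mul_le_mul_of_nonneg_left hdij this) this
      _ = d * (|v i| * |v i|) := by ring
  · -- off-diagonal case
    have hne' : ((i, j) : Fin n × Fin n) ≠ (j, i) := by
      intro h
      exact absurd (congrArg Prod.fst h) (ne_of_lt hlt)
    have hzero : ∀ pr ∈ Finset.univ, pr ∉ ({(i, j), (j, i)} : Finset (Fin n × Fin n)) →
        g pr = 0 := by
      intro pr _ hpr
      simp only [Finset.mem_insert, Finset.mem_singleton] at hpr
      push_neg at hpr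
      have h1 : ¬(pr.1 = i ∧ pr.2 = j) := by
        rintro ⟨ha, hb⟩
        exact hpr.1 (Prod.ext ha hb)
      have h2 : ¬(pr.1 = j ∧ pr.2 = i) := by
        rintro ⟨ha, hb⟩
        exact hpr.2 (Prod.ext ha hb)
      have := hAB pr.1 pr.2 h1 h2
      simp only [hg]
      rw [this]
      ring
    have hsum : ∑ pr ∈ ({(i, j), (j, i)} : Finset (Fin n × Fin n)), g pr
        = ∑ pr : Fin n × Fin n, g pr :=
      Finset.sum_subset (Finset.subset_univ _) hzero
    rw [htot, ← hsum, Finset.sum_pair hne', if_neg (ne_of_lt hlt)]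
    have e1 : |v i * (A i j - B i j) * v j| ≤ d * (|v i| * |v j|) := by
      rw [abs_mul, abs_mul]
      have h1 := abs_nonneg (v i)
      have h2 := abs_nonneg (v j)
      calc |v i| * |A i j - B i j| * |v j| ≤ |v i| * d * |v j| :=
            mul_le_mul_of_nonneg_right (mul_le_mul_of_nonneg_left hdij h1) h2
        _ = d * (|v i| * |v j|) := by ring
    have e2 : |v j * (A j i - B j i) * v i| ≤ d * (|v i| * |v j|) := by
      rw [abs_mul, abs_mul]
      have h1 := abs_nonneg (v i)
      have h2 := abs_nonneg (v j)
      calc |v j| * |A j i - B j i| * |v i| ≤ |v j| * d * |v i| :=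
            mul_le_mul_of_nonneg_right (mul_le_mul_of_nonneg_left hdji h2) h1
        _ = d * (|v i| * |v j|) := by ring
    calc |v i * (A i j - B i j) * v j + v j * (A j i - B j i) * v i|
        ≤ |v i * (A i j - B i j) * v j| + |v j * (A j i - B j i) * v i| := abs_add_le _ _
      _ ≤ d * (|v i| * |v j|) + d * (|v i| * |v j|) := add_le_add e1 e2
      _ = 2 * d * (|v i| * |v j|) := by ring

lemma pair_sum_le (v : Fin n → ℝ) :
    ∑ q : {q : Fin n × Fin n // q.1 ≤ q.2},
      (if q.val.1 = q.val.2 then (1:ℝ) else 4) * (v q.val.1 ^ 2 * v q.val.2 ^ 2)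
      ≤ 2 * (∑ i, v i ^ 2) ^ 2 := by
  classical
  set f : Fin n × Fin n → ℝ := fun pr => v pr.1 ^ 2 * v pr.2 ^ 2 with hf
  have hf0 : ∀ pr, 0 ≤ f pr := by intro pr; simp only [hf]; positivity
  have hRHS : (∑ i, v i ^ 2) ^ 2 = ∑ pr : Fin n × Fin n, f pr := by
    rw [Fintype.sum_prod_type, sq, Finset.sum_mul_sum]
  have hsub : ∑ q : {q : Fin n × Fin n // q.1 ≤ q.2},
      (if q.val.1 = q.val.2 then (1:ℝ) else 4) * (v q.val.1 ^ 2 * v q.val.2 ^ 2)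
      = ∑ pr ∈ Finset.univ.filter (fun pr : Fin n × Fin n => pr.1 ≤ pr.2),
          (if pr.1 = pr.2 then (1:ℝ) else 4) * f pr := by
    exact (Finset.sum_subtype (Finset.univ.filter (fun pr : Fin n × Fin n => pr.1 ≤ pr.2))
      (fun pr => by simp)
      (fun pr => (if pr.1 = pr.2 then (1:ℝ) else 4) * f pr)).symm
  rw [hsub, hRHS]
  -- split into strict and diagonal
  have hunion : Finset.univ.filter (fun pr : Fin n × Fin n => pr.1 ≤ pr.2)
      = Finset.univ.filter (fun pr : Fin n × Fin n => pr.1 < pr.2)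
        ∪ Finset.univ.filter (fun pr : Fin n × Fin n => pr.1 = pr.2) := by
    ext pr
    simp only [Finset.mem_filter, Finset.mem_union, Finset.mem_univ, true_and]
    constructor
    · intro h; rcases eq_or_lt_of_le h with h | h
      · exact Or.inr h
      · exact Or.inl h
    · rintro (h | h)
      · exact le_of_lt h
      · exact le_of_eq h
  have hdisj : Disjoint (Finset.univ.filter (fun pr : Fin n × Fin n => pr.1 < pr.2))
      (Finset.univ.filter (fun pr : Fin n × Fin n => pr.1 = pr.2)) := by
    rw [Finset.disjoint_left]
    intro pr h1 h2
    simp only [Finset.mem_filter, Finset.mem_univ, true_and] at h1 h2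
    exact absurd h2 (ne_of_lt h1)
  rw [hunion, Finset.sum_union hdisj]
  have hstrict : ∑ pr ∈ Finset.univ.filter (fun pr : Fin n × Fin n => pr.1 < pr.2),
      (if pr.1 = pr.2 then (1:ℝ) else 4) * f pr
      = 4 * ∑ pr ∈ Finset.univ.filter (fun pr : Fin n × Fin n => pr.1 < pr.2), f pr := by
    rw [Finset.mul_sum]
    refine Finset.sum_congr rfl fun pr hpr => ?_
    have := (Finset.mem_filter.1 hpr).2
    rw [if_neg (ne_of_lt this)]
  have hdiag : ∑ pr ∈ Finset.univ.filter (fun pr : Fin n × Fin n => pr.1 = pr.2),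
      (if pr.1 = pr.2 then (1:ℝ) else 4) * f pr
      = ∑ pr ∈ Finset.univ.filter (fun pr : Fin n × Fin n => pr.1 = pr.2), f pr := by
    refine Finset.sum_congr rfl fun pr hpr => ?_
    have := (Finset.mem_filter.1 hpr).2
    rw [if_pos this, one_mul]
  rw [hstrict, hdiag]
  -- swap bijection
  have hswap : ∑ pr ∈ Finset.univ.filter (fun pr : Fin n × Fin n => pr.1 < pr.2), f pr
      = ∑ pr ∈ Finset.univ.filter (fun pr : Fin n × Fin n => pr.2 < pr.1), f pr := by
    refine Finset.sum_nbij' (i := Prod.swap) (j := Prod.swap) ?_ ?_ ?_ ?_ ?_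
    · intro pr hpr
      simp only [Finset.mem_filter, Finset.mem_univ, true_and] at hpr ⊢
      exact hpr
    · intro pr hpr
      simp only [Finset.mem_filter, Finset.mem_univ, true_and] at hpr ⊢
      exact hpr
    · intro pr _; exact Prod.swap_swap pr
    · intro pr _; exact Prod.swap_swap pr
    · intro pr _
      simp only [hf, Prod.fst_swap, Prod.snd_swap]
      ring
  -- total decomposition
  have htotal : ∑ pr : Fin n × Fin n, f pr
      = (∑ pr ∈ Finset.univ.filter (fun pr : Fin n × Fin n => pr.1 ≤ pr.2), f pr)
        + ∑ pr ∈ Finset.univ.filter (fun pr : Fin n × Fin n => pr.2 < pr.1), f pr := by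
    rw [← Finset.sum_filter_add_sum_filter_not Finset.univ
      (fun pr : Fin n × Fin n => pr.1 ≤ pr.2) f]
    congr 1
    refine Finset.sum_congr ?_ fun _ _ => rfl
    ext pr
    simp [not_le]
  have hle_split : ∑ pr ∈ Finset.univ.filter (fun pr : Fin n × Fin n => pr.1 ≤ pr.2), f pr
      = (∑ pr ∈ Finset.univ.filter (fun pr : Fin n × Fin n => pr.1 < pr.2), f pr)
        + ∑ pr ∈ Finset.univ.filter (fun pr : Fin n × Fin n => pr.1 = pr.2), f pr := by
    rw [hunion, Finset.sum_union hdisj]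
  have hd0 : 0 ≤ ∑ pr ∈ Finset.univ.filter (fun pr : Fin n × Fin n => pr.1 = pr.2), f pr :=
    Finset.sum_nonneg fun pr _ => hf0 pr
  rw [htotal, hle_split]
  rw [hswap]
  linarith


lemma gap_sum_le {M : Matrix (Fin n) (Fin n) ℝ} (hM : M.IsSymm) (hn : 0 < n)
    (c a bneg : ℝ) (d : ℝ) (hd : 0 ≤ d)
    (hentry : ∀ i j : Fin n, |c * (M i j * (a - bneg))| ≤ d)
    (x : {q : Fin n × Fin n // q.1 ≤ q.2} → Bool) :
    ∑ q : {q : Fin n × Fin n // q.1 ≤ q.2},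
      max (matSpectralNorm (XmatD c M a bneg x)
        - matSpectralNorm (XmatD c M a bneg (Function.update x q (!(x q))))) 0 ^ 2
      ≤ 2 * d ^ 2 := by
  classical
  obtain ⟨v, hv1, hv2⟩ := exists_attaining_vector (XmatD_isSymm hM c a bneg x) hn
  have hvsum : ∑ i, (v : Fin n → ℝ) i ^ 2 = 1 := by
    rw [← norm_sq_euclid v, hv1, one_pow]
  have hq : ∀ q : {q : Fin n × Fin n // q.1 ≤ q.2},
      max (matSpectralNorm (XmatD c M a bneg x)
        - matSpectralNorm (XmatD c M a bneg (Function.update x q (!(x q))))) 0 ^ 2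
      ≤ (if q.val.1 = q.val.2 then (1:ℝ) else 4)
          * ((v : Fin n → ℝ) q.val.1 ^ 2 * (v : Fin n → ℝ) q.val.2 ^ 2) * d ^ 2 := by
    intro q
    obtain ⟨⟨i, j⟩, hij⟩ := q
    set q : {r : Fin n × Fin n // r.1 ≤ r.2} := ⟨(i, j), hij⟩ with hqdef
    set y := Function.update x q (!(x q)) with hy
    set A := XmatD c M a bneg x with hA
    set B := XmatD c M a bneg y with hB
    have hxy : ∀ q', q' ≠ q → x q' = y q' := by
      intro q' h
      rw [hy, Function.update_of_ne h]
    have hyq : y q = !(x q) := by rw [hy, Function.update_self]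
    have hdij : |A i j - B i j| ≤ d := by
      have hb1 : A i j = c * (M i j * valB a bneg (x q)) := by
        rw [hA, XmatD_apply, dif_pos hij]
      have hb2 : B i j = c * (M i j * valB a bneg (y q)) := by
        rw [hB, XmatD_apply, dif_pos hij]
      have he : A i j - B i j
          = (if x q then (1:ℝ) else -1) * (c * (M i j * (a - bneg))) := by
        rw [hb1, hb2, hyq]
        cases hxq : x q <;> simp [valB] <;> ring
      rw [he]
      cases hxq : x q
      · rw [if_neg (by simp [hxq]), neg_one_mul, abs_neg]
        exact hentry _ _
      · rw [if_pos (by simp [hxq]), one_mul]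
        exact hentry _ _
    have hdji : |A j i - B j i| ≤ d := by
      rcases eq_or_lt_of_le (show i ≤ j from hij) with rfl | hlt
      · exact hdij
      · have hnle : ¬ j ≤ i := not_le.2 hlt
        have hb1 : A j i = c * (M j i * valB a bneg (x q)) := by
          rw [hA, XmatD_apply, dif_neg hnle]
        have hb2 : B j i = c * (M j i * valB a bneg (y q)) := by
          rw [hB, XmatD_apply, dif_neg hnle]
        have he : A j i - B j i
            = (if x q then (1:ℝ) else -1) * (c * (M j i * (a - bneg))) := by
          rw [hb1, hb2, hyq]
          cases hxq : x q <;> simp [valB] <;> ring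
        rw [he]
        cases hxq : x q
        · rw [if_neg (by simp [hxq]), neg_one_mul, abs_neg]
          exact hentry _ _
        · rw [if_pos (by simp [hxq]), one_mul]
          exact hentry _ _
    have hcongr : ∀ k l, ¬(k = i ∧ l = j) → ¬(k = j ∧ l = i) →
        A k l = B k l := fun k l h1 h2 => XmatD_congr c M a bneg hxy k l h1 h2
    have step2 : |bilin A v v - bilin B v v|
        ≤ (if i = j then (1:ℝ) else 2) * d
            * (|(v : Fin n → ℝ) i| * |(v : Fin n → ℝ) j|) :=
      abs_bilin_sub_le A B v i j hij d hd hcongr hdij hdji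
    have step1 : max (matSpectralNorm A - matSpectralNorm B) 0 ≤ |bilin A v v - bilin B v v| := by
      rcases le_or_gt (matSpectralNorm A) (matSpectralNorm B) with h | h
      · rw [max_eq_right (by linarith)]
        exact abs_nonneg _
      · rw [max_eq_left (by linarith)]
        have h2 : |bilin B v v| ≤ matSpectralNorm B := abs_bilin_le B hv1 hv1
        calc matSpectralNorm A - matSpectralNorm B ≤ |bilin A v v| - |bilin B v v| := by
              rw [← hv2]; linarith
          _ ≤ |bilin A v v - bilin B v v| := abs_sub_abs_le_abs_sub _ _
    have hmax0 : 0 ≤ max (matSpectralNorm A - matSpectralNorm B) 0 := le_max_right _ _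
    have step3 := pow_le_pow_left₀ hmax0 (le_trans step1 step2) 2
    refine le_trans step3 (le_of_eq ?_)
    rcases eq_or_ne i j with hdg | hdg
    · rw [if_pos hdg, if_pos hdg, ← sq_abs ((v : Fin n → ℝ) i), ← sq_abs ((v : Fin n → ℝ) j)]
      ring
    · rw [if_neg hdg, if_neg hdg, ← sq_abs ((v : Fin n → ℝ) i), ← sq_abs ((v : Fin n → ℝ) j)]
      ring
  calc ∑ q : {q : Fin n × Fin n // q.1 ≤ q.2},
      max (matSpectralNorm (XmatD c M a bneg x)
        - matSpectralNorm (XmatD c M a bneg (Function.update x q (!(x q))))) 0 ^ 2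
      ≤ ∑ q : {q : Fin n × Fin n // q.1 ≤ q.2},
          (if q.val.1 = q.val.2 then (1:ℝ) else 4)
            * ((v : Fin n → ℝ) q.val.1 ^ 2 * (v : Fin n → ℝ) q.val.2 ^ 2) * d ^ 2 :=
        Finset.sum_le_sum fun q _ => hq q
    _ = (∑ q : {q : Fin n × Fin n // q.1 ≤ q.2},
          (if q.val.1 = q.val.2 then (1:ℝ) else 4)
            * ((v : Fin n → ℝ) q.val.1 ^ 2 * (v : Fin n → ℝ) q.val.2 ^ 2)) * d ^ 2 := by
        rw [Finset.sum_mul]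
    _ ≤ 2 * (∑ i, (v : Fin n → ℝ) i ^ 2) ^ 2 * d ^ 2 :=
        mul_le_mul_of_nonneg_right (pair_sum_le v) (by positivity)
    _ = 2 * d ^ 2 := by rw [hvsum]; ring


end SpecAux

/-- Theorem A-2 of the paper, second moment: bound on `E[‖E‖₂²]`. -/
theorem hadamard_residual_opNorm_second_moment
    {Ω : Type*} [MeasurableSpace Ω] (P : Measure Ω) [IsProbabilityMeasure P]
    {n : ℕ} (M : Matrix (Fin n) (Fin n) ℝ) (p : ℝ)
    (C : Ω → Matrix (Fin n) (Fin n) ℝ) (E : Ω → Matrix (Fin n) (Fin n) ℝ) (mE : ℝ)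
    (hMsymm : M.IsSymm) (hM0 : M ≠ 0) (hp0 : 0 < p) (hp1 : p < 1)
    (hC : IsBernoulliType P p C)
    (hEdef : ∀ ω, E ω = Real.sqrt ((1 - p) / p) • Matrix.hadamard M (C ω))
    (hm1 : (1 : ℝ≥0∞) / 2 ≤ P {ω | matSpectralNorm (E ω) ≤ mE})
    (hm2 : (1 : ℝ≥0∞) / 2 ≤ P {ω | mE ≤ matSpectralNorm (E ω)}) :
    (∫ ω, matSpectralNorm (E ω) ^ 2 ∂P) ≤
      mE ^ 2 + 32 * supNorm M ^ 2 / p ^ 2 +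
        8 * mE * Real.sqrt (2 * Real.pi * supNorm M ^ 2 / p ^ 2) := by
  classical
  rcases Nat.eq_zero_or_pos n with hn0 | hn
  · exfalso
    subst hn0
    exact hM0 (Subsingleton.elim M 0)
  obtain ⟨hCsymm, hCmeas, hCindep, hCdist⟩ := hC
  set c : ℝ := Real.sqrt ((1 - p) / p) with hc
  set bneg : ℝ := -Real.sqrt (p / (1 - p)) with hbneg
  have hp0' : (0:ℝ) ≤ p := le_of_lt hp0
  have h1p : (0:ℝ) < 1 - p := by linarith
  have hcpos : 0 < c := Real.sqrt_pos.2 (div_pos h1p hp0)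
  have hbneg0 : bneg < 0 := by
    rw [hbneg, neg_lt, neg_zero]
    exact Real.sqrt_pos.2 (div_pos hp0 h1p)
  have hcb : c ≠ bneg := by linarith
  have hkey : c * (c - bneg) = 1 / p := by
    have h1 : c * c = (1 - p) / p := Real.mul_self_sqrt (le_of_lt (div_pos h1p hp0))
    have h2 : c * (-bneg) = 1 := by
      rw [hbneg, neg_neg, hc, ← Real.sqrt_mul (le_of_lt (div_pos h1p hp0))]
      rw [show (1 - p) / p * (p / (1 - p)) = 1 by field_simp]
      exact Real.sqrt_one
    have : c * (c - bneg) = c * c + c * (-bneg) := by ring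
    rw [this, h1, h2]
    field_simp
    ring
  set S : ℝ := supNorm M with hSdef
  have hS0 : 0 ≤ S := norm_nonneg _
  have hMij : ∀ i j, |M i j| ≤ S := by
    intro i j
    calc |M i j| = ‖M i j‖ := (Real.norm_eq_abs _).symm
      _ ≤ ‖(fun j' => M i j' : Fin n → ℝ)‖ := norm_le_pi_norm _ j
      _ ≤ ‖(fun i' j' => M i' j' : Fin n → Fin n → ℝ)‖ :=
          norm_le_pi_norm (fun i' j' => M i' j' : Fin n → Fin n → ℝ) i
      _ = S := rfl
  have hentry : ∀ i j : Fin n, |c * (M i j * (c - bneg))| ≤ S / p := by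
    intro i j
    have h1 : |c * (M i j * (c - bneg))| = |M i j| * (c * (c - bneg)) := by
      have hcb' : 0 ≤ c - bneg := by linarith
      rw [abs_mul, abs_mul, abs_of_nonneg (le_of_lt hcpos), abs_of_nonneg hcb']
      ring
    rw [h1, hkey]
    rw [div_eq_mul_one_div S p]
    exact mul_le_mul_of_nonneg_right (hMij i j) (le_of_lt (by positivity : (0:ℝ) < 1 / p))
  -- Y and G
  set Y : Ω → ({q : Fin n × Fin n // q.1 ≤ q.2} → Bool) :=
    fun ω q => decide (C ω q.val.1 q.val.2 = c) with hY
  set G : ({q : Fin n × Fin n // q.1 ≤ q.2} → Bool) → ℝ :=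
    fun x => matSpectralNorm (SpecAux.XmatD c M c bneg x) with hG
  have hGpos : ∀ x, 0 ≤ G x := fun x => norm_nonneg _
  set Bs : Bool → Set ℝ := fun b => if b then {c} else {c}ᶜ with hBs
  have hBsmeas : ∀ b, MeasurableSet (Bs b) := by
    intro b
    cases b
    · exact (measurableSet_singleton c).compl
    · exact measurableSet_singleton c
  have hBmem : ∀ (r : ℝ) (b : Bool), r ∈ Bs b ↔ (decide (r = c) = b) := by
    intro r b
    cases b
    · simp [hBs]
    · simp [hBs]
  have hdist : ∀ q : {q : Fin n × Fin n // q.1 ≤ q.2},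
      P {ω | C ω q.val.1 q.val.2 = c} = ENNReal.ofReal p ∧
        P {ω | C ω q.val.1 q.val.2 = bneg} = ENNReal.ofReal (1 - p) :=
    fun q => hCdist q.val.1 q.val.2 q.2
  have hrep : ∀ x, {ω | Y ω = x}
      = ⋂ q ∈ (Finset.univ : Finset {q : Fin n × Fin n // q.1 ≤ q.2}),
          (fun ω => C ω q.val.1 q.val.2) ⁻¹' (Bs (x q)) := by
    intro x
    ext ω
    simp only [Set.mem_setOf_eq, Set.mem_iInter, Set.mem_preimage, Finset.mem_univ,
      true_implies]
    rw [funext_iff]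
    apply forall_congr'
    intro q
    rw [hBmem]
  have hYxmeas : ∀ x, MeasurableSet {ω | Y ω = x} := by
    intro x
    rw [hrep x]
    exact MeasurableSet.biInter (Set.to_countable _)
      (fun q _ => (hCmeas q.val.1 q.val.2) (hBsmeas (x q)))
  have hPBs : ∀ (q : {q : Fin n × Fin n // q.1 ≤ q.2}) (b : Bool),
      P ((fun ω => C ω q.val.1 q.val.2) ⁻¹' (Bs b))
        = (if b then ENNReal.ofReal p else ENNReal.ofReal (1 - p)) := by
    intro q b
    cases b
    · -- false: complement
      have hpre : (fun ω => C ω q.val.1 q.val.2) ⁻¹' (Bs false)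
          = {ω | C ω q.val.1 q.val.2 = c}ᶜ := by
        ext ω; simp [hBs]
      have hmc : MeasurableSet {ω | C ω q.val.1 q.val.2 = c} :=
        (hCmeas q.val.1 q.val.2) (measurableSet_singleton c)
      rw [hpre, measure_compl hmc (measure_ne_top P _), measure_univ, (hdist q).1,
        if_neg (by simp), ← ENNReal.ofReal_one, ← ENNReal.ofReal_sub 1 hp0']
    · rw [if_pos rfl]
      exact (hdist q).1
  have hYlaw : ∀ x, P {ω | Y ω = x}
      = ∏ q : {q : Fin n × Fin n // q.1 ≤ q.2},
          (if x q then ENNReal.ofReal p else ENNReal.ofReal (1 - p)) := by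
    intro x
    rw [hrep x, hCindep.measure_inter_preimage_eq_mul Finset.univ
      (fun q _ => hBsmeas (x q))]
    exact Finset.prod_congr rfl fun q _ => hPBs q (x q)
  set μw : ({q : Fin n × Fin n // q.1 ≤ q.2} → Bool) → ℝ :=
    fun x => (P {ω | Y ω = x}).toReal with hμw
  have hμ0 : ∀ x, 0 ≤ μw x := fun x => ENNReal.toReal_nonneg
  have hμprod : ∀ x, μw x = Cube.mu p (1 - p) x := by
    intro x
    rw [hμw]
    simp only []
    rw [hYlaw x, ENNReal.toReal_prod]
    unfold Cube.mu Cube.wt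
    refine Finset.prod_congr rfl fun q _ => ?_
    cases hxq : x q
    · rw [if_neg (by simp), if_neg (by simp), ENNReal.toReal_ofReal (le_of_lt h1p)]
    · rw [if_pos rfl, if_pos rfl, ENNReal.toReal_ofReal hp0']
  -- integral formula
  have hint : ∀ f : ({q : Fin n × Fin n // q.1 ≤ q.2} → Bool) → ℝ,
      ∫ ω, f (Y ω) ∂P = ∑ x, μw x * f x := by
    intro f
    have hdecomp : (fun ω => f (Y ω))
        = fun ω => ∑ x : ({q : Fin n × Fin n // q.1 ≤ q.2} → Bool),
            Set.indicator {ω' | Y ω' = x} (fun _ => f x) ω := by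
      funext ω
      rw [Finset.sum_eq_single (Y ω)]
      · rw [Set.indicator_of_mem (by exact rfl)]
      · intro x _ hx
        exact Set.indicator_of_notMem (fun h => hx (by exact h.symm ▸ rfl)) _
      · intro h; exact absurd (Finset.mem_univ _) h
    rw [hdecomp, MeasureTheory.integral_finset_sum]
    · refine Finset.sum_congr rfl fun x _ => ?_
      rw [MeasureTheory.integral_indicator_const _ (hYxmeas x), smul_eq_mul]
      rfl
    · intro x _
      exact (MeasureTheory.integrable_const (f x)).indicator (hYxmeas x)
  have hμsum : ∑ x, μw x = 1 := by
    have h := hint (fun _ => (1:ℝ))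
    simp only [integral_const, measure_univ, probReal_univ, ENNReal.toReal_one, smul_eq_mul, mul_one,
      one_mul] at h
    exact h.symm
  -- ae identification
  have hae : ∀ᵐ ω ∂P, ∀ q : {q : Fin n × Fin n // q.1 ≤ q.2},
      C ω q.val.1 q.val.2 = c ∨ C ω q.val.1 q.val.2 = bneg := by
    rw [MeasureTheory.ae_all_iff]
    intro q
    rw [MeasureTheory.ae_iff]
    have hset : {ω | ¬(C ω q.val.1 q.val.2 = c ∨ C ω q.val.1 q.val.2 = bneg)}
        = ({ω | C ω q.val.1 q.val.2 = c} ∪ {ω | C ω q.val.1 q.val.2 = bneg})ᶜ := by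
      ext ω; simp [not_or]
    rw [hset]
    have hmeasc : MeasurableSet {ω | C ω q.val.1 q.val.2 = c} :=
      (hCmeas q.val.1 q.val.2) (measurableSet_singleton c)
    have hmeasb : MeasurableSet {ω | C ω q.val.1 q.val.2 = bneg} :=
      (hCmeas q.val.1 q.val.2) (measurableSet_singleton bneg)
    have hdisj : Disjoint {ω | C ω q.val.1 q.val.2 = c} {ω | C ω q.val.1 q.val.2 = bneg} := by
      rw [Set.disjoint_left]
      intro ω h1 h2
      exact hcb (h1 ▸ h2 ▸ rfl)
    have hunion : P ({ω | C ω q.val.1 q.val.2 = c} ∪ {ω | C ω q.val.1 q.val.2 = bneg}) = 1 := by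
      rw [measure_union hdisj hmeasb, (hdist q).1, (hdist q).2,
        ← ENNReal.ofReal_add hp0' (le_of_lt h1p)]
      rw [show p + (1 - p) = 1 by ring, ENNReal.ofReal_one]
    rw [measure_compl (hmeasc.union hmeasb) (measure_ne_top P _), hunion, measure_univ,
      tsub_self]
  have hEeq : ∀ ω, (∀ q : {q : Fin n × Fin n // q.1 ≤ q.2},
      C ω q.val.1 q.val.2 = c ∨ C ω q.val.1 q.val.2 = bneg) →
      E ω = SpecAux.XmatD c M c bneg (Y ω) := by
    intro ω hω
    have hCval : ∀ q : {q : Fin n × Fin n // q.1 ≤ q.2},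
        C ω q.val.1 q.val.2 = SpecAux.valB c bneg (Y ω q) := by
      intro q
      rcases hω q with h | h
      · have hYq : Y ω q = true := by
          rw [hY]; simp only []; rw [decide_eq_true_eq]; exact h
        rw [h, hYq]
        simp [SpecAux.valB]
      · have hYq : Y ω q = false := by
          rw [hY]; simp only []; rw [decide_eq_false_iff_not]
          rw [h]; exact fun hh => hcb hh.symm
        rw [h, hYq]
        simp [SpecAux.valB]
    ext i j
    rw [hEdef ω]
    rw [Matrix.smul_apply, Matrix.hadamard_apply, SpecAux.XmatD_apply, smul_eq_mul]
    rcases le_or_gt i j with hij | hij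
    · rw [dif_pos hij]
      rw [hCval ⟨(i, j), hij⟩]
    · rw [dif_neg (not_le.2 hij)]
      have hsym : C ω i j = C ω j i := (congrFun (congrFun (hCsymm ω) i) j).symm
      rw [hsym, hCval ⟨(j, i), le_of_lt hij⟩]
  have hXae : (fun ω => matSpectralNorm (E ω)) =ᵐ[P] fun ω => G (Y ω) := by
    filter_upwards [hae] with ω hω
    rw [hEeq ω hω]
  have hLHS : ∫ ω, matSpectralNorm (E ω) ^ 2 ∂P = ∑ x, μw x * G x ^ 2 := by
    rw [← hint (fun x => G x ^ 2)]
    apply integral_congr_ae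
    filter_upwards [hXae] with ω hω
    rw [hω]
  -- median mass
  have hsetae : P {ω | matSpectralNorm (E ω) ≤ mE} = P {ω | G (Y ω) ≤ mE} := by
    apply measure_congr
    filter_upwards [hXae] with ω hω
    change (matSpectralNorm (E ω) ≤ mE) = (G (Y ω) ≤ mE)
    rw [hω]
  have hrepS : {ω | G (Y ω) ≤ mE}
      = ⋃ x ∈ Finset.univ.filter (fun x => G x ≤ mE), {ω | Y ω = x} := by
    ext ω
    simp only [Set.mem_setOf_eq, Set.mem_iUnion, Finset.mem_filter, Finset.mem_univ, true_and]
    constructor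
    · intro h
      exact ⟨Y ω, h, rfl⟩
    · rintro ⟨x, hx, hYx⟩
      rw [hYx]
      exact hx
  have hPsum : P {ω | G (Y ω) ≤ mE}
      = ∑ x ∈ Finset.univ.filter (fun x => G x ≤ mE), P {ω | Y ω = x} := by
    rw [hrepS]
    apply measure_biUnion_finset
    · intro x hx x' hx' hxx'
      rw [Function.onFun, Set.disjoint_left]
      intro ω h1 h2
      exact hxx' (by rw [← h1, ← h2])
    · exact fun x _ => hYxmeas x
  have hhalf : (1:ℝ)/2 ≤ ∑ x ∈ Finset.univ.filter (fun x => G x ≤ mE), μw x := by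
    have h1 : (1:ℝ≥0∞)/2 ≤ P {ω | G (Y ω) ≤ mE} := hsetae ▸ hm1
    have h2 := ENNReal.toReal_mono (measure_ne_top P _) h1
    rw [hPsum, ENNReal.toReal_sum (fun x _ => measure_ne_top P _)] at h2
    calc (1:ℝ)/2 = ((1:ℝ≥0∞)/2).toReal := by
          rw [ENNReal.toReal_div, ENNReal.toReal_one]
          norm_num
      _ ≤ _ := h2
  have hmE0 : 0 ≤ mE := by
    by_contra h
    push_neg at h
    have hempty : Finset.univ.filter (fun x => G x ≤ mE) = ∅ := by
      apply Finset.filter_eq_empty_iff.2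
      intro x _
      push_neg
      exact lt_of_lt_of_le h (hGpos x)
    rw [hempty, Finset.sum_empty] at hhalf
    linarith
  -- variance bound
  set Q := ∑ x, μw x * G x ^ 2 with hQ
  set mb := ∑ x, μw x * G x with hmb
  have hmb0 : 0 ≤ mb :=
    Finset.sum_nonneg fun x _ => mul_nonneg (hμ0 x) (hGpos x)
  have hVar : Q - mb ^ 2 ≤ 2 * (S / p) ^ 2 := by
    have e1 : Q = ∑ x, Cube.mu p (1 - p) x * G x ^ 2 :=
      Finset.sum_congr rfl fun x _ => by rw [hμprod x]
    have e2 : mb = ∑ x, Cube.mu p (1 - p) x * G x :=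
      Finset.sum_congr rfl fun x _ => by rw [hμprod x]
    rw [e1, e2]
    apply Cube.var_le hp0' (le_of_lt h1p) (by ring) G
    intro x
    exact SpecAux.gap_sum_le hMsymm hn c c bneg (S / p) (div_nonneg hS0 hp0') hentry x
  have hVid : Q - mb ^ 2 = ∑ x, μw x * (G x - mb) ^ 2 := by
    have e : ∀ x, μw x * (G x - mb) ^ 2
        = μw x * G x ^ 2 - 2 * mb * (μw x * G x) + mb ^ 2 * μw x := fun x => by ring
    rw [Finset.sum_congr rfl fun x _ => e x]
    rw [Finset.sum_add_distrib, Finset.sum_sub_distrib, ← Finset.mul_sum, ← Finset.mul_sum,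
      ← hmb, ← hQ, hμsum]
    ring
  have hV0 : 0 ≤ Q - mb ^ 2 := by
    rw [hVid]
    exact Finset.sum_nonneg fun x _ => mul_nonneg (hμ0 x) (sq_nonneg _)
  -- Chebyshev
  have hcheb : mb ≤ mE + Real.sqrt (2 * (Q - mb ^ 2)) := by
    rcases le_or_gt mb mE with h | h
    · have := Real.sqrt_nonneg (2 * (Q - mb ^ 2))
      linarith
    · have hdev : (mb - mE) ^ 2 * (1/2) ≤ Q - mb ^ 2 := by
        rw [hVid]
        calc (mb - mE) ^ 2 * (1/2)
            ≤ (mb - mE) ^ 2 * ∑ x ∈ Finset.univ.filter (fun x => G x ≤ mE), μw x :=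
              mul_le_mul_of_nonneg_left hhalf (sq_nonneg _)
          _ = ∑ x ∈ Finset.univ.filter (fun x => G x ≤ mE), (mb - mE) ^ 2 * μw x :=
              Finset.mul_sum _ _ _
          _ ≤ ∑ x ∈ Finset.univ.filter (fun x => G x ≤ mE), μw x * (G x - mb) ^ 2 := by
              refine Finset.sum_le_sum fun x hx => ?_
              have hGx : G x ≤ mE := (Finset.mem_filter.1 hx).2
              have h3 : (mb - mE) ^ 2 ≤ (mb - G x) ^ 2 :=
                pow_le_pow_left₀ (by linarith) (by linarith) 2
              have h4 : (G x - mb) ^ 2 = (mb - G x) ^ 2 := by ring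
              rw [h4, mul_comm]
              exact mul_le_mul_of_nonneg_left h3 (hμ0 x)
          _ ≤ ∑ x, μw x * (G x - mb) ^ 2 :=
              Finset.sum_le_sum_of_subset_of_nonneg (Finset.filter_subset _ _)
                (fun x _ _ => mul_nonneg (hμ0 x) (sq_nonneg _))
      have h5 : (mb - mE) ^ 2 ≤ 2 * (Q - mb ^ 2) := by linarith
      have h6 : mb - mE ≤ Real.sqrt (2 * (Q - mb ^ 2)) :=
        (Real.le_sqrt (by linarith) (by linarith)).2 h5
      linarith
  -- assembly
  rw [hLHS]
  have hSp0 : (0:ℝ) ≤ S / p := div_nonneg hS0 hp0'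
  have hsq2V : Real.sqrt (2 * (Q - mb ^ 2)) ≤ 2 * (S / p) := by
    have h2 : (2 * (S / p)) ^ 2 = 4 * (S / p) ^ 2 := by ring
    have h1 : 2 * (Q - mb ^ 2) ≤ (2 * (S / p)) ^ 2 := by linarith [hVar]
    calc Real.sqrt (2 * (Q - mb ^ 2)) ≤ Real.sqrt ((2 * (S / p)) ^ 2) :=
          Real.sqrt_le_sqrt h1
      _ = 2 * (S / p) := Real.sqrt_sq (by linarith [hSp0])
  have hmbb : mb ^ 2 ≤ (mE + 2 * (S / p)) ^ 2 := by
    apply pow_le_pow_left₀ hmb0 _ 2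
    calc mb ≤ mE + Real.sqrt (2 * (Q - mb ^ 2)) := hcheb
      _ ≤ mE + 2 * (S / p) := add_le_add_right hsq2V mE
  have hRge : S / p ≤ Real.sqrt (2 * Real.pi * S ^ 2 / p ^ 2) := by
    have hpi : (1:ℝ) ≤ 2 * Real.pi := by nlinarith [Real.pi_gt_three]
    have ht : (0:ℝ) ≤ S ^ 2 / p ^ 2 := div_nonneg (sq_nonneg S) (sq_nonneg p)
    have harg : (S / p) ^ 2 ≤ 2 * Real.pi * S ^ 2 / p ^ 2 := by
      rw [div_pow]
      rw [show 2 * Real.pi * S ^ 2 / p ^ 2 = (2 * Real.pi) * (S ^ 2 / p ^ 2) by ring]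
      nlinarith [ht, hpi]
    have h0 : (0:ℝ) ≤ 2 * Real.pi * S ^ 2 / p ^ 2 :=
      div_nonneg (mul_nonneg (by linarith [Real.pi_pos]) (sq_nonneg S)) (sq_nonneg p)
    exact (Real.le_sqrt hSp0 h0).2 harg
  have hmu : 0 ≤ mE * (S / p) := mul_nonneg hmE0 hSp0
  have hu2 : (0:ℝ) ≤ (S / p) ^ 2 := sq_nonneg _
  have hA2 : 8 * mE * (S / p) ≤ 8 * mE * Real.sqrt (2 * Real.pi * S ^ 2 / p ^ 2) := by
    have h8 : (0:ℝ) ≤ 8 * mE := by linarith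
    calc 8 * mE * (S / p) = (8 * mE) * (S / p) := by ring
      _ ≤ (8 * mE) * Real.sqrt (2 * Real.pi * S ^ 2 / p ^ 2) :=
          mul_le_mul_of_nonneg_left hRge h8
      _ = 8 * mE * Real.sqrt (2 * Real.pi * S ^ 2 / p ^ 2) := by ring
  have hexp : (mE + 2 * (S / p)) ^ 2 = mE ^ 2 + 4 * (mE * (S / p)) + 4 * (S / p) ^ 2 := by
    ring
  rw [hexp] at hmbb
  rw [show 32 * S ^ 2 / p ^ 2 = 32 * (S / p) ^ 2 from by ring]
  linarith [hVar, hmbb, hA2, hu2, hmu]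
end
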